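/- arXiv:0806.0442 — 6 statements merged into one kernel-verified Lean document; each statement's English description precedes it below -/
import Mathlib

section
/- Let A be an m×m real matrix, B an m×k matrix, D an m×d matrix, and suppose Rank[B, AB, …, A^{m−1}B, D, AD, …, A^{m−1}D] = m. Then for every t > 0 there exist α, β, γ > 0 such that for every unit vector l ∈ ℝ^m, the Lebesgue measure of the set {s ∈ [0,t] : ‖B* e^{sA*} l‖ > α or ‖D* e^{sA*} l‖ > β} is at least γ. -/
open MeasureTheory Matrix

noncomputable def eunorm {n : ℕ} (v : Fin n → ℝ) : ℝ := Real.sqrt (∑ i, v i ^ 2)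

/-- The block matrix `[B, AB, …, A^{m−1}B, D, AD, …, A^{m−1}D]`. -/
noncomputable def kalmanMatrix {m k d : ℕ} (A : Matrix (Fin m) (Fin m) ℝ)
    (B : Matrix (Fin m) (Fin k) ℝ) (D : Matrix (Fin m) (Fin d) ℝ) :
    Matrix (Fin m) (Fin m × (Fin k ⊕ Fin d)) ℝ :=
  Matrix.of fun i jc => match jc.2 with
    | Sum.inl b => ((A ^ (jc.1 : ℕ)) * B) i b
    | Sum.inr e => ((A ^ (jc.1 : ℕ)) * D) i e

/-! ### Auxiliary lemmas -/

lemma expEntry_hasDerivAt {m : ℕ} (M : Matrix (Fin m) (Fin m) ℝ) (s : ℝ) (i j : Fin m) :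
    HasDerivAt (fun u : ℝ => NormedSpace.exp (u • M) i j)
      ((NormedSpace.exp (s • M) * M) i j) s := by
  letI : SeminormedRing (Matrix (Fin m) (Fin m) ℝ) := Matrix.linftyOpSemiNormedRing
  letI : NormedRing (Matrix (Fin m) (Fin m) ℝ) := Matrix.linftyOpNormedRing
  letI : NormedAlgebra ℝ (Matrix (Fin m) (Fin m) ℝ) := Matrix.linftyOpNormedAlgebra
  have h := hasDerivAt_exp_smul_const M s
  have h2 := ((Matrix.entryLinearMap ℝ ℝ i j).toContinuousLinearMap).hasFDerivAt.comp_hasDerivAt s h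
  exact h2

lemma expEntry_continuous {m : ℕ} (M : Matrix (Fin m) (Fin m) ℝ) (i j : Fin m) :
    Continuous fun s : ℝ => NormedSpace.exp (s • M) i j := by
  letI : SeminormedRing (Matrix (Fin m) (Fin m) ℝ) := Matrix.linftyOpSemiNormedRing
  letI : NormedRing (Matrix (Fin m) (Fin m) ℝ) := Matrix.linftyOpNormedRing
  letI : NormedAlgebra ℝ (Matrix (Fin m) (Fin m) ℝ) := Matrix.linftyOpNormedAlgebra
  have h1 : Continuous fun s : ℝ => NormedSpace.exp (s • M) :=
    continuous_iff_continuousAt.2 fun s => (hasDerivAt_exp_smul_const M s).continuousAt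
  have h2 : Continuous fun X : Matrix (Fin m) (Fin m) ℝ => X i j :=
    (continuous_apply j).comp (continuous_apply i)
  exact h2.comp h1

lemma dot_exp_cont {m : ℕ} (M : Matrix (Fin m) (Fin m) ℝ) (u v : Fin m → ℝ) :
    Continuous fun s : ℝ => u ⬝ᵥ (NormedSpace.exp (s • M) *ᵥ v) := by
  simp only [dotProduct, mulVec]
  exact continuous_finset_sum _ fun i _ => continuous_const.mul
    (continuous_finset_sum _ fun j _ => (expEntry_continuous M i j).mul continuous_const)

lemma dot_exp_vanish {m : ℕ} (M : Matrix (Fin m) (Fin m) ℝ) {t : ℝ} (ht : 0 < t)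
    (u l : Fin m → ℝ)
    (h : ∀ s ∈ Set.Icc (0:ℝ) t, u ⬝ᵥ (NormedSpace.exp (s • M) *ᵥ l) = 0) (n : ℕ) :
    u ⬝ᵥ ((M ^ n) *ᵥ l) = 0 := by
  have hderiv : ∀ (v : Fin m → ℝ) (s : ℝ),
      HasDerivAt (fun s : ℝ => u ⬝ᵥ (NormedSpace.exp (s • M) *ᵥ v))
        (u ⬝ᵥ ((NormedSpace.exp (s • M) * M) *ᵥ v)) s := by
    intro v s
    simp only [dotProduct, mulVec]
    exact HasDerivAt.fun_sum fun i _ => ((HasDerivAt.fun_sum fun j _ =>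
      (expEntry_hasDerivAt M s i j).mul_const (v j)).const_mul (u i))
  have key : ∀ n, ∀ s ∈ Set.Icc (0:ℝ) t,
      u ⬝ᵥ (NormedSpace.exp (s • M) *ᵥ ((M ^ n) *ᵥ l)) = 0 := by
    intro n
    induction n with
    | zero => simpa using h
    | succ n ih =>
      have hIoo : ∀ s ∈ Set.Ioo (0:ℝ) t,
          u ⬝ᵥ (NormedSpace.exp (s • M) *ᵥ ((M ^ (n+1)) *ᵥ l)) = 0 := by
        intro s hs
        have hev : (fun s' : ℝ => u ⬝ᵥ (NormedSpace.exp (s' • M) *ᵥ ((M ^ n) *ᵥ l)))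
            =ᶠ[nhds s] fun _ => 0 :=
          Filter.eventually_of_mem (isOpen_Ioo.mem_nhds hs) fun x hx =>
            ih x (Set.Ioo_subset_Icc_self hx)
        have h1 := hderiv ((M ^ n) *ᵥ l) s
        have h2 : HasDerivAt
            (fun s' : ℝ => u ⬝ᵥ (NormedSpace.exp (s' • M) *ᵥ ((M ^ n) *ᵥ l))) 0 s :=
          (hasDerivAt_const s (0:ℝ)).congr_of_eventuallyEq hev
        have h3 := h1.unique h2
        rw [Matrix.mulVec_mulVec] at h3 ⊢
        rw [← h3]
        congr 1
        rw [mul_assoc, ← pow_succ']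
      intro s hs
      have hcl : Set.Icc (0:ℝ) t = closure (Set.Ioo 0 t) := (closure_Ioo ht.ne).symm
      have heq := Set.EqOn.closure (fun x hx => hIoo x hx) (dot_exp_cont M u _) continuous_const
      exact heq (hcl ▸ hs)
  have h0 := key n 0 (Set.left_mem_Icc.mpr ht.le)
  simpa [NormedSpace.exp_zero] using h0

lemma eq_zero_of_vecMul_eq_zero {m : ℕ} {n : Type*} [Fintype n] [DecidableEq n]
    (K : Matrix (Fin m) n ℝ) (hrank : K.rank = m) {l : Fin m → ℝ} (hl : l ᵥ* K = 0) :
    l = 0 := by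
  have h1 : Kᵀ.rank = m := by rw [Matrix.rank_transpose]; exact hrank
  have hker : l ∈ LinearMap.ker Kᵀ.mulVecLin := by
    rw [LinearMap.mem_ker, Matrix.mulVecLin_apply, Matrix.mulVec_transpose]
    exact hl
  have hrn := LinearMap.finrank_range_add_finrank_ker Kᵀ.mulVecLin
  have hdom : Module.finrank ℝ (Fin m → ℝ) = m := Module.finrank_fin_fun ℝ
  rw [hdom] at hrn
  have hker0 : Module.finrank ℝ (LinearMap.ker Kᵀ.mulVecLin) = 0 := by
    have h2 : Kᵀ.rank = Module.finrank ℝ (LinearMap.range Kᵀ.mulVecLin) := rfl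
    omega
  have hbot : LinearMap.ker Kᵀ.mulVecLin = ⊥ := Submodule.finrank_eq_zero.mp hker0
  rw [hbot, Submodule.mem_bot] at hker
  exact hker

set_option maxHeartbeats 2000000 in
theorem kalman_lemma {m k d : ℕ} (A : Matrix (Fin m) (Fin m) ℝ)
    (B : Matrix (Fin m) (Fin k) ℝ) (D : Matrix (Fin m) (Fin d) ℝ)
    (hrank : (kalmanMatrix A B D).rank = m) (t : ℝ) (ht : 0 < t) :
    ∃ α β γ : ℝ, 0 < α ∧ 0 < β ∧ 0 < γ ∧
      ∀ l : Fin m → ℝ, eunorm l = 1 →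
        ENNReal.ofReal γ ≤ volume {s : ℝ | s ∈ Set.Icc 0 t ∧
          (α < eunorm (Bᵀ *ᵥ (NormedSpace.exp (s • Aᵀ) *ᵥ l)) ∨
           β < eunorm (Dᵀ *ᵥ (NormedSpace.exp (s • Aᵀ) *ᵥ l)))} := by
  classical
  by_cases hS : ∃ l : Fin m → ℝ, eunorm l = 1
  swap
  · exact ⟨1, 1, 1, one_pos, one_pos, one_pos, fun l hl => absurd ⟨l, hl⟩ hS⟩
  obtain ⟨l₁, hl₁⟩ := hS
  set M : Matrix (Fin m) (Fin m) ℝ := Aᵀ with hM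
  set g : (Fin m → ℝ) → ℝ → ℝ := fun l s =>
    (∑ b, (Bᵀ *ᵥ (NormedSpace.exp (s • M) *ᵥ l)) b ^ 2)
      + (∑ e, (Dᵀ *ᵥ (NormedSpace.exp (s • M) *ᵥ l)) e ^ 2) with hg_def
  have hg0 : ∀ l s, 0 ≤ g l s := fun l s =>
    add_nonneg (Finset.sum_nonneg fun _ _ => sq_nonneg _)
      (Finset.sum_nonneg fun _ _ => sq_nonneg _)
  have hw : ∀ i : Fin m, Continuous fun p : (Fin m → ℝ) × ℝ =>
      (NormedSpace.exp (p.2 • M) *ᵥ p.1) i := by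
    intro i
    simp only [mulVec, dotProduct]
    exact continuous_finset_sum _ fun j _ =>
      ((expEntry_continuous M i j).comp continuous_snd).mul
        ((continuous_apply j).comp continuous_fst)
  have hgc : Continuous fun p : (Fin m → ℝ) × ℝ => g p.1 p.2 := by
    rw [hg_def]
    refine Continuous.add ?_ ?_
    · refine continuous_finset_sum _ fun b _ => Continuous.pow ?_ 2
      simp only [mulVec, dotProduct]
      exact continuous_finset_sum _ fun i _ => continuous_const.mul (hw i)
    · refine continuous_finset_sum _ fun e _ => Continuous.pow ?_ 2
      simp only [mulVec, dotProduct]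
      exact continuous_finset_sum _ fun i _ => continuous_const.mul (hw i)
  have hgs : ∀ l, Continuous (g l) := by
    intro l
    rw [hg_def]
    refine Continuous.add ?_ ?_
    · refine continuous_finset_sum _ fun b _ => Continuous.pow ?_ 2
      simp only [mulVec, dotProduct]
      exact continuous_finset_sum _ fun i _ => continuous_const.mul
        (continuous_finset_sum _ fun j _ =>
          (expEntry_continuous M i j).mul continuous_const)
    · refine continuous_finset_sum _ fun e _ => Continuous.pow ?_ 2
      simp only [mulVec, dotProduct]
      exact continuous_finset_sum _ fun i _ => continuous_const.mul
        (continuous_finset_sum _ fun j _ =>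
          (expEntry_continuous M i j).mul continuous_const)
  -- the unit sphere
  set S : Set (Fin m → ℝ) := {l | ∑ i, l i ^ 2 = 1} with hS_def
  have hsum_of : ∀ l : Fin m → ℝ, eunorm l = 1 → l ∈ S := by
    intro l hl
    have h0 : 0 ≤ ∑ i, l i ^ 2 := Finset.sum_nonneg fun _ _ => sq_nonneg _
    have h2 := congrArg (fun x : ℝ => x ^ 2) hl
    simpa [eunorm, Real.sq_sqrt h0, hS_def] using h2
  have hl₁S : l₁ ∈ S := hsum_of _ hl₁
  have hScl : IsClosed S :=
    isClosed_eq (continuous_finset_sum _ fun i _ => (continuous_apply i).pow 2)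
      continuous_const
  have hSb : S ⊆ Metric.closedBall 0 1 := by
    intro l hl
    rw [Metric.mem_closedBall, dist_zero_right]
    rw [pi_norm_le_iff_of_nonneg zero_le_one]
    intro i
    have h1 : l i ^ 2 ≤ 1 := by
      have h2 := Finset.single_le_sum (f := fun i => l i ^ 2)
        (fun j _ => sq_nonneg _) (Finset.mem_univ i)
      rw [hl] at h2
      exact h2
    have h3 : |l i| ^ 2 ≤ 1 := by rw [sq_abs]; exact h1
    calc ‖l i‖ = |l i| := rfl
    _ ≤ 1 := by nlinarith [abs_nonneg (l i)]
  have hScomp : IsCompact S :=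
    (isCompact_closedBall 0 1).of_isClosed_subset hScl hSb
  -- the integral functional
  set I : (Fin m → ℝ) → ℝ := fun l => ∫ s in Set.Ioo (0:ℝ) t, g l s with hI_def
  have hI_eq : ∀ l, I l = ∫ s in (0:ℝ)..t, g l s := by
    intro l
    have hrfl : I l = ∫ s in Set.Ioo (0:ℝ) t, g l s := rfl
    rw [hrfl, intervalIntegral.integral_of_le ht.le,
      MeasureTheory.integral_Ioc_eq_integral_Ioo]
  have hIc : Continuous I := by
    have h2 := intervalIntegral.continuous_parametric_intervalIntegral_of_continuous'
      (μ := volume) (f := g) hgc 0 t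
    rw [show I = fun l => ∫ s in (0:ℝ)..t, g l s from funext hI_eq]
    exact h2
  -- positivity of the integral on the sphere
  have hIpos : ∀ l ∈ S, 0 < I l := by
    intro l hlS
    have hlsum : ∑ i, l i ^ 2 = 1 := hlS
    have hex : ∃ s₀ ∈ Set.Icc (0:ℝ) t, 0 < g l s₀ := by
      by_contra hcon
      push_neg at hcon
      have hzero : ∀ s ∈ Set.Icc (0:ℝ) t, g l s = 0 := fun s hs =>
        le_antisymm (hcon s hs) (hg0 l s)
      have hBz : ∀ s ∈ Set.Icc (0:ℝ) t, ∀ b : Fin k,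
          (Bᵀ *ᵥ (NormedSpace.exp (s • M) *ᵥ l)) b = 0 := by
        intro s hs b
        have h : (∑ b'' , (Bᵀ *ᵥ (NormedSpace.exp (s • M) *ᵥ l)) b'' ^ 2)
            + (∑ e'' , (Dᵀ *ᵥ (NormedSpace.exp (s • M) *ᵥ l)) e'' ^ 2) = 0 :=
          hzero s hs
        have hb1 : 0 ≤ ∑ b', (Bᵀ *ᵥ (NormedSpace.exp (s • M) *ᵥ l)) b' ^ 2 :=
          Finset.sum_nonneg fun _ _ => sq_nonneg _
        have hb2 : 0 ≤ ∑ e, (Dᵀ *ᵥ (NormedSpace.exp (s • M) *ᵥ l)) e ^ 2 :=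
          Finset.sum_nonneg fun _ _ => sq_nonneg _
        have h1 : ∑ b', (Bᵀ *ᵥ (NormedSpace.exp (s • M) *ᵥ l)) b' ^ 2 = 0 := by
          linarith
        have h2 := (Finset.sum_eq_zero_iff_of_nonneg
          (fun i _ => sq_nonneg _)).mp h1 b (Finset.mem_univ b)
        exact pow_eq_zero_iff two_ne_zero |>.mp h2
      have hDz : ∀ s ∈ Set.Icc (0:ℝ) t, ∀ e : Fin d,
          (Dᵀ *ᵥ (NormedSpace.exp (s • M) *ᵥ l)) e = 0 := by
        intro s hs e
        have h : (∑ b'' , (Bᵀ *ᵥ (NormedSpace.exp (s • M) *ᵥ l)) b'' ^ 2)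
            + (∑ e'' , (Dᵀ *ᵥ (NormedSpace.exp (s • M) *ᵥ l)) e'' ^ 2) = 0 :=
          hzero s hs
        have hb1 : 0 ≤ ∑ b', (Bᵀ *ᵥ (NormedSpace.exp (s • M) *ᵥ l)) b' ^ 2 :=
          Finset.sum_nonneg fun _ _ => sq_nonneg _
        have hb2 : 0 ≤ ∑ e', (Dᵀ *ᵥ (NormedSpace.exp (s • M) *ᵥ l)) e' ^ 2 :=
          Finset.sum_nonneg fun _ _ => sq_nonneg _
        have h1 : ∑ e', (Dᵀ *ᵥ (NormedSpace.exp (s • M) *ᵥ l)) e' ^ 2 = 0 := by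
          linarith
        have h2 := (Finset.sum_eq_zero_iff_of_nonneg
          (fun i _ => sq_nonneg _)).mp h1 e (Finset.mem_univ e)
        exact pow_eq_zero_iff two_ne_zero |>.mp h2
      have hswap : ∀ (p : ℕ) (u : Fin m → ℝ),
          u ⬝ᵥ ((M ^ p) *ᵥ l) = l ⬝ᵥ ((A ^ p) *ᵥ u) := by
        intro p u
        rw [hM, ← Matrix.transpose_pow, Matrix.mulVec_transpose,
          Matrix.dotProduct_mulVec l, dotProduct_comm]
      have hvm : l ᵥ* (kalmanMatrix A B D) = 0 := by
        funext c
        obtain ⟨j, bc⟩ := c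
        rcases bc with b | e
        · have hB' : ∀ s ∈ Set.Icc (0:ℝ) t,
              (fun i => B i b) ⬝ᵥ (NormedSpace.exp (s • M) *ᵥ l) = 0 := by
            intro s hs
            have := hBz s hs b
            simpa [mulVec, dotProduct, Matrix.transpose_apply] using this
          have h1 := dot_exp_vanish M ht (fun i => B i b) l hB' (j : ℕ)
          rw [hswap] at h1
          simp only [Pi.zero_apply, vecMul, dotProduct, kalmanMatrix, Matrix.of_apply]
          simpa [dotProduct, mulVec, Matrix.mul_apply] using h1
        · have hD' : ∀ s ∈ Set.Icc (0:ℝ) t,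
              (fun i => D i e) ⬝ᵥ (NormedSpace.exp (s • M) *ᵥ l) = 0 := by
            intro s hs
            have := hDz s hs e
            simpa [mulVec, dotProduct, Matrix.transpose_apply] using this
          have h1 := dot_exp_vanish M ht (fun i => D i e) l hD' (j : ℕ)
          rw [hswap] at h1
          simp only [Pi.zero_apply, vecMul, dotProduct, kalmanMatrix, Matrix.of_apply]
          simpa [dotProduct, mulVec, Matrix.mul_apply] using h1
      have hl0 : l = 0 := eq_zero_of_vecMul_eq_zero (kalmanMatrix A B D) hrank hvm
      rw [hl0] at hlsum
      simp at hlsum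
    obtain ⟨s₀, hs₀, hgs₀⟩ := hex
    have hInt : IntegrableOn (g l) (Set.Ioo 0 t) volume :=
      ((hgs l).integrableOn_Icc).mono_set Set.Ioo_subset_Icc_self
    have hiff := MeasureTheory.setIntegral_pos_iff_support_of_nonneg_ae
      (μ := volume) (s := Set.Ioo (0:ℝ) t) (f := g l)
      (MeasureTheory.ae_of_all _ (hg0 l)) hInt
    rw [hI_def]
    rw [hiff]
    set U := (g l) ⁻¹' Set.Ioi 0 with hU
    have hUopen : IsOpen U := isOpen_Ioi.preimage (hgs l)
    have hUs₀ : s₀ ∈ U := hgs₀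
    have hne : (U ∩ Set.Ioo 0 t).Nonempty := by
      have hcl : s₀ ∈ closure (Set.Ioo 0 t) := by rw [closure_Ioo ht.ne]; exact hs₀
      exact mem_closure_iff.mp hcl U hUopen hUs₀
    have hpos := (hUopen.inter isOpen_Ioo).measure_pos volume hne
    refine lt_of_lt_of_le hpos (measure_mono ?_)
    rintro x ⟨hx1, hx2⟩
    exact ⟨ne_of_gt hx1, hx2⟩
  -- minimum of I on S
  have hSne : S.Nonempty := ⟨l₁, hl₁S⟩
  obtain ⟨l₀, hl₀S, hminOn⟩ := hScomp.exists_isMinOn hSne hIc.continuousOn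
  set c : ℝ := I l₀ with hc
  have hcpos : 0 < c := hIpos l₀ hl₀S
  -- maximum of g on S × Icc
  obtain ⟨p₀, hp₀, hmaxOn⟩ := (hScomp.prod isCompact_Icc).exists_isMaxOn
    (hSne.prod (Set.nonempty_Icc.mpr ht.le)) hgc.continuousOn
  set Mx : ℝ := max (g p₀.1 p₀.2) 1 with hMx
  have hMxpos : (0:ℝ) < Mx := lt_of_lt_of_le one_pos (le_max_right _ _)
  have hMxge : ∀ l ∈ S, ∀ s ∈ Set.Icc (0:ℝ) t, g l s ≤ Mx := by
    intro l hl s hs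
    exact le_trans (isMaxOn_iff.mp hmaxOn (l, s) ⟨hl, hs⟩) (le_max_left _ _)
  have hct : 0 < c / (4 * t) := by positivity
  refine ⟨Real.sqrt (c / (4 * t)), Real.sqrt (c / (4 * t)), c / (2 * Mx),
    Real.sqrt_pos.mpr hct, Real.sqrt_pos.mpr hct, by positivity, ?_⟩
  intro l hl
  have hlS : l ∈ S := hsum_of l hl
  set T := Set.Ioo (0:ℝ) t with hT
  set P := (g l) ⁻¹' Set.Ioi (c / (2 * t)) with hP
  have hPmeas : MeasurableSet P := (hgs l).measurable measurableSet_Ioi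
  have hInt : IntegrableOn (g l) T volume :=
    ((hgs l).integrableOn_Icc).mono_set Set.Ioo_subset_Icc_self
  have hsplit := MeasureTheory.integral_inter_add_diff
    (f := g l) (μ := volume) (s := T) hPmeas hInt
  have hvolT : volume T ≠ ⊤ := by
    rw [hT, Real.volume_Ioo]; exact ENNReal.ofReal_ne_top
  have hvolTP : volume (T ∩ P) ≠ ⊤ :=
    ne_top_of_le_ne_top hvolT (measure_mono Set.inter_subset_left)
  have hb1 : ∫ s in T ∩ P, g l s ≤ (volume (T ∩ P)).toReal * Mx := by
    have hmono := MeasureTheory.setIntegral_mono_on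
      (hInt.mono_set Set.inter_subset_left)
      ((integrableOn_const_iff (C := Mx)).mpr
        (Or.inr (lt_of_le_of_lt (measure_mono Set.inter_subset_left)
          (lt_of_le_of_ne le_top hvolT))))
      (measurableSet_Ioo.inter hPmeas)
      (fun x hx => hMxge l hlS x (Set.Ioo_subset_Icc_self hx.1))
    rw [MeasureTheory.setIntegral_const] at hmono
    simpa [smul_eq_mul, measureReal_def] using hmono
  have hb2 : ∫ s in T \ P, g l s ≤ c / 2 := by
    have hmono := MeasureTheory.setIntegral_mono_on
      (hInt.mono_set Set.diff_subset)
      ((integrableOn_const_iff (C := c / (2 * t))).mpr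
        (Or.inr (lt_of_le_of_lt (measure_mono Set.diff_subset)
          (lt_of_le_of_ne le_top hvolT))))
      (measurableSet_Ioo.diff hPmeas)
      (fun x hx => by
        have hxnP : x ∉ P := hx.2
        rw [hP, Set.mem_preimage, Set.mem_Ioi] at hxnP
        push_neg at hxnP
        exact hxnP)
    rw [MeasureTheory.setIntegral_const] at hmono
    have hvle : (volume (T \ P)).toReal ≤ t := by
      have h1 : volume (T \ P) ≤ volume T := measure_mono Set.diff_subset
      have h2 : (volume (T \ P)).toReal ≤ (volume T).toReal :=
        ENNReal.toReal_mono hvolT h1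
      rw [hT, Real.volume_Ioo] at h2
      rw [ENNReal.toReal_ofReal (by linarith : (0:ℝ) ≤ t - 0)] at h2
      linarith
    have hcnn : 0 ≤ c / (2 * t) := by positivity
    calc ∫ s in T \ P, g l s ≤ (volume (T \ P)).toReal • (c / (2 * t)) := hmono
    _ = (volume (T \ P)).toReal * (c / (2 * t)) := by rw [smul_eq_mul]
    _ ≤ t * (c / (2 * t)) := by
        exact mul_le_mul_of_nonneg_right hvle hcnn
    _ = c / 2 := by field_simp
  have hcle : c ≤ I l := isMinOn_iff.mp hminOn l hlS
  have hIl : I l = (∫ s in T ∩ P, g l s) + ∫ s in T \ P, g l s := by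
    have hrfl : I l = ∫ s in T, g l s := rfl
    rw [hrfl, ← hsplit]
  have hkey : c / 2 ≤ (volume (T ∩ P)).toReal * Mx := by
    have : c ≤ (volume (T ∩ P)).toReal * Mx + c / 2 := by
      calc c ≤ I l := hcle
      _ = (∫ s in T ∩ P, g l s) + ∫ s in T \ P, g l s := hIl
      _ ≤ (volume (T ∩ P)).toReal * Mx + c / 2 := add_le_add hb1 hb2
    linarith
  have hγle : c / (2 * Mx) ≤ (volume (T ∩ P)).toReal := by
    rw [show c / (2 * Mx) = (c / 2) / Mx by ring]
    rw [div_le_iff₀ hMxpos]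
    exact hkey
  have hsub : T ∩ P ⊆ {s : ℝ | s ∈ Set.Icc 0 t ∧
      (Real.sqrt (c / (4 * t)) < eunorm (Bᵀ *ᵥ (NormedSpace.exp (s • M) *ᵥ l)) ∨
       Real.sqrt (c / (4 * t)) < eunorm (Dᵀ *ᵥ (NormedSpace.exp (s • M) *ᵥ l)))} := by
    rintro s ⟨hsT, hsP⟩
    refine ⟨Set.Ioo_subset_Icc_self hsT, ?_⟩
    rw [hP, Set.mem_preimage, Set.mem_Ioi] at hsP
    by_contra hcon
    push_neg at hcon
    obtain ⟨h1, h2⟩ := hcon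
    have hsb1 : 0 ≤ ∑ b, (Bᵀ *ᵥ (NormedSpace.exp (s • M) *ᵥ l)) b ^ 2 :=
      Finset.sum_nonneg fun _ _ => sq_nonneg _
    have hsb2 : 0 ≤ ∑ e, (Dᵀ *ᵥ (NormedSpace.exp (s • M) *ᵥ l)) e ^ 2 :=
      Finset.sum_nonneg fun _ _ => sq_nonneg _
    have e1 : ∑ b, (Bᵀ *ᵥ (NormedSpace.exp (s • M) *ᵥ l)) b ^ 2 ≤ c / (4 * t) := by
      have h3 := pow_le_pow_left₀ (Real.sqrt_nonneg _) h1 2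
      unfold eunorm at h3
      rw [Real.sq_sqrt hsb1, Real.sq_sqrt hct.le] at h3
      exact h3
    have e2 : ∑ e, (Dᵀ *ᵥ (NormedSpace.exp (s • M) *ᵥ l)) e ^ 2 ≤ c / (4 * t) := by
      have h3 := pow_le_pow_left₀ (Real.sqrt_nonneg _) h2 2
      unfold eunorm at h3
      rw [Real.sq_sqrt hsb2, Real.sq_sqrt hct.le] at h3
      exact h3
    have hgl : g l s ≤ c / (2 * t) := by
      rw [hg_def]
      have : c / (4 * t) + c / (4 * t) = c / (2 * t) := by field_simp; ring
      linarith
    linarith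
  calc ENNReal.ofReal (c / (2 * Mx))
      ≤ ENNReal.ofReal ((volume (T ∩ P)).toReal) := ENNReal.ofReal_le_ofReal hγle
  _ = volume (T ∩ P) := ENNReal.ofReal_toReal hvolTP
  _ ≤ _ := measure_mono hsub
end

section
/- Let Π = Σ_{n≥1} n δ_{1/n!} on ℝ. Then ρ(ε) := [ε² ln(1/ε)]^{−1} ∫_ℝ (u² ∧ ε²) Π(du) → +∞ as ε → 0+. -/
open MeasureTheory Filter
open scoped ENNReal

lemma aux_real : Tendsto (fun x : ℝ => (x - 1) / (2 * Real.log x)) atTop atTop := by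
  have h2 : Real.log =o[atTop] (id : ℝ → ℝ) := Real.isLittleO_log_id_atTop
  have h3 : (id : ℝ → ℝ) =O[atTop] (fun x : ℝ => x - 1) := by
    apply Asymptotics.IsBigO.of_bound 2
    filter_upwards [eventually_ge_atTop (2:ℝ)] with x hx
    simp only [id]
    rw [Real.norm_eq_abs, Real.norm_eq_abs]
    rw [abs_of_nonneg (by linarith), abs_of_nonneg (by linarith)]
    linarith
  have h1 : (fun x : ℝ => 2 * Real.log x) =o[atTop] (fun x : ℝ => x - 1) :=
    (h2.const_mul_left 2).trans_isBigO h3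
  have h0 : Tendsto (fun x : ℝ => 2 * Real.log x / (x - 1)) atTop (nhds 0) :=
    h1.tendsto_div_nhds_zero
  have hpos : ∀ᶠ x : ℝ in atTop, 2 * Real.log x / (x - 1) ∈ Set.Ioi (0:ℝ) := by
    filter_upwards [eventually_gt_atTop (2:ℝ)] with x hx
    have hl : 0 < Real.log x := Real.log_pos (by linarith)
    exact div_pos (mul_pos two_pos hl) (by linarith)
  have h4 : Tendsto (fun x : ℝ => 2 * Real.log x / (x - 1)) atTop (nhdsWithin 0 (Set.Ioi 0)) :=
    tendsto_nhdsWithin_iff.mpr ⟨h0, hpos⟩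
  refine h4.inv_tendsto_nhdsGT_zero.congr' ?_
  filter_upwards [eventually_gt_atTop (2:ℝ)] with x hx
  simp [Pi.inv_apply, inv_div]

lemma aux_nat : Tendsto (fun N : ℕ => ((N:ℝ) - 1) / (2 * Real.log N)) atTop atTop :=
  aux_real.comp tendsto_natCast_atTop_atTop

lemma sum_eq (ε : ℝ) :
    ∫⁻ u, ENNReal.ofReal (min (u ^ 2) (ε ^ 2))
      ∂(Measure.sum fun n : ℕ => (n + 1) • Measure.dirac ((1 : ℝ) / (n + 1).factorial))
    = ∑' n : ℕ, ((n : ℝ≥0∞) + 1) *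
        ENNReal.ofReal (min (((1 : ℝ) / (n + 1).factorial) ^ 2) (ε ^ 2)) := by
  have hmeas : Measurable fun u : ℝ => ENNReal.ofReal (min (u ^ 2) (ε ^ 2)) :=
    ((measurable_id.pow_const 2).min measurable_const).ennreal_ofReal
  rw [lintegral_sum_measure]
  congr 1
  funext n
  rw [← Nat.cast_smul_eq_nsmul ℝ≥0∞ (n + 1), lintegral_smul_measure, lintegral_dirac' _ hmeas]
  push_cast
  ring

lemma term_le (ε : ℝ) (n : ℕ) :
    ((n : ℝ≥0∞) + 1) * ENNReal.ofReal (min (((1 : ℝ) / (n + 1).factorial) ^ 2) (ε ^ 2))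
      ≤ ENNReal.ofReal ((1 : ℝ) / n.factorial) := by
  have h1 : ((n : ℝ≥0∞) + 1) = ENNReal.ofReal ((n : ℝ) + 1) := by
    rw [ENNReal.ofReal_add (by positivity) zero_le_one]
    simp
  rw [h1, ← ENNReal.ofReal_mul (by positivity)]
  apply ENNReal.ofReal_le_ofReal
  have hfp : (0:ℝ) < (n + 1).factorial := by positivity
  have key : ((n:ℝ) + 1) * ((1 : ℝ) / (n + 1).factorial) ^ 2 ≤ 1 / n.factorial := by
    have hf : ((n+1).factorial : ℝ) = ((n:ℝ) + 1) * n.factorial := by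
      rw [Nat.factorial_succ]; push_cast; ring
    have hn1 : (1:ℝ) ≤ n.factorial := by exact_mod_cast Nat.one_le_iff_ne_zero.mpr n.factorial_ne_zero
    have hnf : (0:ℝ) < n.factorial := by positivity
    rw [hf]
    have heq : ((n:ℝ) + 1) * ((1:ℝ) / (((n:ℝ) + 1) * n.factorial)) ^ 2
        = 1 / (((n:ℝ)+1) * (n.factorial:ℝ)^2) := by
      field_simp
    rw [heq]
    apply one_div_le_one_div_of_le hnf
    nlinarith [sq_nonneg ((n.factorial:ℝ)-1)]
  calc ((n:ℝ) + 1) * min (((1 : ℝ) / (n + 1).factorial) ^ 2) (ε ^ 2)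
      ≤ ((n:ℝ) + 1) * ((1 : ℝ) / (n + 1).factorial) ^ 2 := by
        apply mul_le_mul_of_nonneg_left (min_le_left _ _) (by positivity)
    _ ≤ 1 / n.factorial := key

lemma fin_sum (ε : ℝ) :
    (∑' n : ℕ, ((n : ℝ≥0∞) + 1) *
        ENNReal.ofReal (min (((1 : ℝ) / (n + 1).factorial) ^ 2) (ε ^ 2))) ≠ ⊤ := by
  have hs : Summable (fun n : ℕ => (1:ℝ)/n.factorial) := by
    simpa using Real.summable_pow_div_factorial 1
  have hle : (∑' n : ℕ, ((n : ℝ≥0∞) + 1) *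
        ENNReal.ofReal (min (((1 : ℝ) / (n + 1).factorial) ^ 2) (ε ^ 2)))
      ≤ ∑' n : ℕ, ENNReal.ofReal ((1:ℝ)/n.factorial) :=
    ENNReal.tsum_le_tsum (term_le ε)
  refine ne_top_of_le_ne_top ?_ hle
  rw [← ENNReal.ofReal_tsum_of_nonneg (fun n => by positivity) hs]
  exact ENNReal.ofReal_ne_top

lemma gauss_sum (K : ℕ) : ∑ n ∈ Finset.range K, ((n:ℝ)+1) = K*(K+1)/2 := by
  induction K with
  | zero => simp
  | succ k ih => rw [Finset.sum_range_succ, ih]; push_cast; ring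

lemma key_bound (P : Measure ℝ)
    (hP : P = Measure.sum fun n : ℕ => (n + 1) • Measure.dirac ((1 : ℝ) / (n + 1).factorial))
    (ρ : ℝ → ℝ)
    (hρ : ∀ ε : ℝ, ρ ε = (∫⁻ u, ENNReal.ofReal (min (u ^ 2) (ε ^ 2)) ∂P).toReal /
      (ε ^ 2 * Real.log (1 / ε)))
    (N : ℕ) (hN : 2 ≤ N) (ε : ℝ)
    (hε1 : 1 / (N.factorial : ℝ) ≤ ε) (hε2 : ε < 1 / (((N - 1).factorial : ℕ) : ℝ)) :
    ((N:ℝ) - 1) / (2 * Real.log N) ≤ ρ ε := by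
  have hε0 : 0 < ε := lt_of_lt_of_le (by positivity) hε1
  have hfm1 : (1:ℝ) ≤ ((N-1).factorial : ℝ) := by
    exact_mod_cast Nat.one_le_iff_ne_zero.mpr (N-1).factorial_ne_zero
  have hεlt1 : ε < 1 := lt_of_lt_of_le hε2 (by
    rw [div_le_one (by linarith)]; exact hfm1)
  have hlogpos : 0 < Real.log (1/ε) := Real.log_pos (one_lt_one_div hε0 hεlt1)
  have hNR : (1:ℝ) < (N:ℝ) := by exact_mod_cast Nat.lt_of_lt_of_le one_lt_two hN
  have hlogN : 0 < Real.log N := Real.log_pos hNR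
  have hlogle : Real.log (1/ε) ≤ (N:ℝ) * Real.log N := by
    have h1 : (1:ℝ)/ε ≤ (N.factorial:ℝ) := by
      rw [div_le_iff₀ hε0]
      rw [div_le_iff₀ (by positivity : (0:ℝ) < (N.factorial:ℝ))] at hε1
      linarith
    have h2 : (N.factorial:ℝ) ≤ (N:ℝ)^N := by exact_mod_cast Nat.factorial_le_pow N
    calc Real.log (1/ε) ≤ Real.log ((N:ℝ)^N) :=
          Real.log_le_log (by positivity) (le_trans h1 h2)
      _ = (N:ℝ) * Real.log N := Real.log_pow N N
  -- value of the integral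
  have hLeq : ∫⁻ u, ENNReal.ofReal (min (u ^ 2) (ε ^ 2)) ∂P
      = ∑' n : ℕ, ((n : ℝ≥0∞) + 1) *
          ENNReal.ofReal (min (((1 : ℝ) / (n + 1).factorial) ^ 2) (ε ^ 2)) := by
    rw [hP]; exact sum_eq ε
  -- lower bound
  have hsum_real : ∑ n ∈ Finset.range (N-1), ((n:ℝ)+1) = ((N:ℝ)-1)*(N:ℝ)/2 := by
    rw [gauss_sum (N-1)]
    have h1 : ((N-1 : ℕ):ℝ) = (N:ℝ) - 1 := by
      rw [Nat.cast_sub (by omega)]; norm_num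
    rw [h1]; ring
  have hlow : ENNReal.ofReal ((((N:ℝ)-1)*(N:ℝ)/2) * ε^2)
      ≤ ∑' n : ℕ, ((n : ℝ≥0∞) + 1) *
          ENNReal.ofReal (min (((1 : ℝ) / (n + 1).factorial) ^ 2) (ε ^ 2)) := by
    rw [← hsum_real, Finset.sum_mul, ENNReal.ofReal_sum_of_nonneg (fun n _ => by positivity)]
    refine le_trans (le_of_eq (Finset.sum_congr rfl fun n hn => ?_)) (ENNReal.sum_le_tsum _)
    rw [Finset.mem_range] at hn
    have hfle : ((n+1).factorial : ℕ) ≤ (N-1).factorial := Nat.factorial_le (by omega)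
    have hone : ε ≤ (1:ℝ) / ((n+1).factorial : ℝ) := by
      refine le_trans hε2.le ?_
      apply one_div_le_one_div_of_le (by positivity)
      exact_mod_cast hfle
    have hmin : min (((1 : ℝ) / (n + 1).factorial) ^ 2) (ε ^ 2) = ε ^ 2 := by
      apply min_eq_right
      exact pow_le_pow_left₀ hε0.le hone 2
    rw [hmin, ENNReal.ofReal_mul (by positivity)]
    congr 1
    rw [ENNReal.ofReal_add (by positivity) zero_le_one]
    simp
  have hfin := fin_sum ε
  have htoReal : (((N:ℝ)-1)*(N:ℝ)/2) * ε^2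
      ≤ (∫⁻ u, ENNReal.ofReal (min (u ^ 2) (ε ^ 2)) ∂P).toReal := by
    rw [hLeq]
    have h := ENNReal.toReal_mono hfin hlow
    rwa [ENNReal.toReal_ofReal (mul_nonneg (div_nonneg (mul_nonneg (by linarith) (by positivity)) (by norm_num)) (sq_nonneg ε))] at h
  rw [hρ]
  have hD : 0 < ε^2 * Real.log (1/ε) := mul_pos (by positivity) hlogpos
  have hd : ε^2 * Real.log (1/ε) ≤ ε^2 * ((N:ℝ) * Real.log N) :=
    mul_le_mul_of_nonneg_left hlogle (sq_nonneg ε)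
  have step1 : ((N:ℝ)-1)/(2*Real.log N)
      = ((((N:ℝ)-1)*(N:ℝ)/2) * ε^2) / (ε^2 * ((N:ℝ) * Real.log N)) := by
    field_simp
  rw [step1]
  exact div_le_div₀ ENNReal.toReal_nonneg htoReal hD hd

theorem rho_tendsto_atTop_for_weighted_factorial_measure
    (P : Measure ℝ)
    (hP : P = Measure.sum fun n : ℕ => (n + 1) • Measure.dirac ((1 : ℝ) / (n + 1).factorial))
    (ρ : ℝ → ℝ)
    (hρ : ∀ ε : ℝ, ρ ε = (∫⁻ u, ENNReal.ofReal (min (u ^ 2) (ε ^ 2)) ∂P).toReal /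
      (ε ^ 2 * Real.log (1 / ε))) :
    Tendsto ρ (nhdsWithin 0 (Set.Ioi 0)) atTop := by
  rw [tendsto_atTop]
  intro C
  obtain ⟨M0, hM0⟩ := eventually_atTop.mp (aux_nat.eventually_ge_atTop C)
  set M := max M0 2 with hMdef
  have hMfac : (0:ℝ) < 1/(M.factorial:ℝ) := by positivity
  filter_upwards [Ioo_mem_nhdsGT_of_mem ⟨le_refl 0, hMfac⟩] with ε hε
  obtain ⟨hε0, hεM⟩ := hε
  have hex : ∃ n : ℕ, 1/(n.factorial:ℝ) ≤ ε := by
    obtain ⟨n, hn⟩ := exists_nat_ge (1/ε)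
    refine ⟨n+1, ?_⟩
    have h2 : ((n+1:ℕ):ℝ) ≤ ((n+1).factorial : ℝ) := by
      exact_mod_cast Nat.self_le_factorial (n+1)
    have h3 : (1:ℝ)/ε ≤ ((n+1).factorial:ℝ) := by
      refine le_trans hn (le_trans ?_ h2)
      push_cast; linarith
    rw [div_le_iff₀ (by positivity)]
    rw [div_le_iff₀ hε0] at h3
    linarith
  set N := Nat.find hex with hNdef
  have hN1 : 1/(N.factorial:ℝ) ≤ ε := Nat.find_spec hex
  have hNM : M < N := by
    by_contra h
    push_neg at h
    have hfle : (N.factorial : ℕ) ≤ M.factorial := Nat.factorial_le h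
    have : (1:ℝ)/(M.factorial:ℝ) ≤ 1/(N.factorial:ℝ) := by
      apply one_div_le_one_div_of_le (by positivity)
      exact_mod_cast hfle
    linarith
  have h2M : 2 ≤ M := le_max_right M0 2
  have hN2 : 2 ≤ N := by omega
  have hε2 : ε < 1/(((N-1).factorial : ℕ):ℝ) := by
    have := Nat.find_min hex (show N - 1 < N by omega)
    push_neg at this
    exact this
  have hC : C ≤ ((N:ℝ)-1)/(2*Real.log N) := hM0 N (by omega)
  exact hC.trans (key_bound P hP ρ hρ N hN2 ε hN1 hε2)
end

section
/- Let Π = Σ_{n≥1} δ_{1/n!} on ℝ. Then Π(ℝ) = +∞, but ρ(ε) := [ε² ln(1/ε)]^{−1} ∫_ℝ (u² ∧ ε²) Π(du) → 0 as ε → 0+. -/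
open MeasureTheory Filter
open scoped ENNReal
set_option maxHeartbeats 1000000

lemma pow_le_factorial_add (m j : ℕ) : m ^ j ≤ (m + j).factorial := by
  induction j with
  | zero => simpa using Nat.one_le_iff_ne_zero.mpr (Nat.factorial_ne_zero m)
  | succ j ih =>
    rw [pow_succ]
    calc m ^ j * m ≤ (m + j).factorial * (m + j + 1) := Nat.mul_le_mul ih (by omega)
    _ = (m + (j + 1)).factorial := by
        rw [show m + (j+1) = (m+j)+1 from rfl, Nat.factorial_succ]; ring

lemma factorial_mul_two_pow_le (K i : ℕ) :
    (K + 1).factorial * 2 ^ i ≤ (K + 1 + i).factorial := by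
  induction i with
  | zero => simp
  | succ i ih =>
    rw [pow_succ, ← mul_assoc]
    calc (K+1).factorial * 2 ^ i * 2 ≤ (K+1+i).factorial * (K+1+i+1) :=
      Nat.mul_le_mul ih (by omega)
    _ = (K + 1 + (i+1)).factorial := by
        rw [show K+1+(i+1) = (K+1+i)+1 from rfl, Nat.factorial_succ]; ring

lemma main_bound (K : ℕ) (ε : ℝ) (hε : 0 < ε) (hK : (1:ℝ) ≤ ε * (K + 1).factorial) :
    (∑' n : ℕ, ENNReal.ofReal (min (((1:ℝ) / (n + 1).factorial) ^ 2) (ε ^ 2)))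
      ≤ ENNReal.ofReal ((K + 2) * ε ^ 2) := by
  set t : ℕ → ℝ≥0∞ := fun n => ENNReal.ofReal (min (((1:ℝ) / (n + 1).factorial) ^ 2) (ε ^ 2)) with ht
  have hsplit : (∑ i ∈ Finset.range K, t i) + ∑' i : ℕ, t (i + K) = ∑' n, t n :=
    Summable.sum_add_tsum_nat_add' (k := K) ENNReal.summable
  rw [← hsplit]
  have haK : (1:ℝ) / (K + 1).factorial ≤ ε := by
    rw [div_le_iff₀ (by positivity)]
    linarith [hK]
  have h1 : (∑ i ∈ Finset.range K, t i) ≤ (K : ℝ≥0∞) * ENNReal.ofReal (ε ^ 2) := by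
    calc (∑ i ∈ Finset.range K, t i) ≤ ∑ _i ∈ Finset.range K, ENNReal.ofReal (ε ^ 2) :=
      Finset.sum_le_sum fun i _ => ENNReal.ofReal_le_ofReal (min_le_right _ _)
    _ = (K : ℝ≥0∞) * ENNReal.ofReal (ε ^ 2) := by
        rw [Finset.sum_const, Finset.card_range, nsmul_eq_mul]
  have hsum4 : Summable (fun i : ℕ => ε ^ 2 * (1/4:ℝ) ^ i) :=
    (summable_geometric_of_lt_one (by norm_num) (by norm_num)).mul_left _
  have h2 : (∑' i : ℕ, t (i + K)) ≤ ENNReal.ofReal (2 * ε ^ 2) := by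
    have hterm : ∀ i : ℕ, t (i + K) ≤ ENNReal.ofReal (ε ^ 2 * (1/4:ℝ) ^ i) := by
      intro i
      have hfac : ((K + 1).factorial * 2 ^ i : ℕ) ≤ (i + K + 1).factorial := by
        calc ((K + 1).factorial * 2 ^ i : ℕ) ≤ (K + 1 + i).factorial :=
          factorial_mul_two_pow_le K i
        _ = (i + K + 1).factorial := by ring_nf
      have hfr : ((K + 1).factorial : ℝ) * 2 ^ i ≤ ((i + K + 1).factorial : ℝ) := by
        exact_mod_cast hfac
      have hai : (1:ℝ) / (i + K + 1).factorial ≤ ε * (1/2) ^ i := by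
        have hpos : (0:ℝ) < ((K + 1).factorial : ℝ) * 2 ^ i := by positivity
        calc (1:ℝ) / (i + K + 1).factorial ≤ 1 / (((K + 1).factorial : ℝ) * 2 ^ i) :=
          one_div_le_one_div_of_le hpos hfr
        _ = (1 / ((K + 1).factorial : ℝ)) * (1/2) ^ i := by
            field_simp
            rw [← mul_pow]; norm_num
        _ ≤ ε * (1/2) ^ i := mul_le_mul_of_nonneg_right haK (by positivity)
      have hsq : min (((1:ℝ) / (i + K + 1).factorial) ^ 2) (ε ^ 2) ≤ ε ^ 2 * (1/4 : ℝ) ^ i := by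
        have h4 : ((1:ℝ) / (i + K + 1).factorial) ^ 2 ≤ (ε * (1/2) ^ i) ^ 2 :=
          pow_le_pow_left₀ (by positivity) hai 2
        have h5 : (ε * (1/2:ℝ) ^ i) ^ 2 = ε ^ 2 * (1/4:ℝ) ^ i := by
          rw [mul_pow]
          congr 1
          rw [← pow_mul, mul_comm i 2, pow_mul]
          norm_num
        calc min (((1:ℝ) / (i + K + 1).factorial) ^ 2) (ε ^ 2)
            ≤ ((1:ℝ) / (i + K + 1).factorial) ^ 2 := min_le_left _ _
        _ ≤ (ε * (1/2) ^ i) ^ 2 := h4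
        _ = ε ^ 2 * (1/4:ℝ) ^ i := h5
      rw [ht]; exact ENNReal.ofReal_le_ofReal hsq
    calc (∑' i : ℕ, t (i + K)) ≤ ∑' i : ℕ, ENNReal.ofReal (ε ^ 2 * (1/4:ℝ) ^ i) :=
      ENNReal.tsum_le_tsum hterm
    _ = ENNReal.ofReal (∑' i : ℕ, ε ^ 2 * (1/4:ℝ) ^ i) :=
      (ENNReal.ofReal_tsum_of_nonneg (fun i => by positivity) hsum4).symm
    _ ≤ ENNReal.ofReal (2 * ε ^ 2) := by
      apply ENNReal.ofReal_le_ofReal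
      rw [tsum_mul_left, tsum_geometric_of_lt_one (by norm_num) (by norm_num)]
      nlinarith [sq_nonneg ε]
  calc (∑ i ∈ Finset.range K, t i) + ∑' i : ℕ, t (i + K)
      ≤ (K : ℝ≥0∞) * ENNReal.ofReal (ε ^ 2) + ENNReal.ofReal (2 * ε ^ 2) :=
    add_le_add h1 h2
  _ = ENNReal.ofReal (K * ε ^ 2) + ENNReal.ofReal (2 * ε ^ 2) := by
      rw [← ENNReal.ofReal_natCast K, ← ENNReal.ofReal_mul (by positivity)]
  _ = ENNReal.ofReal (K * ε ^ 2 + 2 * ε ^ 2) := by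
      rw [← ENNReal.ofReal_add (by positivity) (by positivity)]
  _ ≤ ENNReal.ofReal ((K + 2) * ε ^ 2) := ENNReal.ofReal_le_ofReal (by nlinarith)

theorem rho_tendsto_zero_for_factorial_measure
    (P : Measure ℝ)
    (hP : P = Measure.sum fun n : ℕ => Measure.dirac ((1 : ℝ) / (n + 1).factorial))
    (ρ : ℝ → ℝ)
    (hρ : ∀ ε : ℝ, ρ ε = (∫⁻ u, ENNReal.ofReal (min (u ^ 2) (ε ^ 2)) ∂P).toReal /
      (ε ^ 2 * Real.log (1 / ε))) :
    P Set.univ = ⊤ ∧ Tendsto ρ (nhdsWithin 0 (Set.Ioi 0)) (nhds 0) := by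
  have hint : ∀ ε : ℝ, (∫⁻ u, ENNReal.ofReal (min (u ^ 2) (ε ^ 2)) ∂P)
      = ∑' n : ℕ, ENNReal.ofReal (min (((1:ℝ) / (n + 1).factorial) ^ 2) (ε ^ 2)) := by
    intro ε
    rw [hP, lintegral_sum_measure]
    exact tsum_congr fun n => lintegral_dirac _ _
  refine ⟨?_, ?_⟩
  · rw [hP, Measure.sum_apply _ MeasurableSet.univ]
    simp only [measure_univ]
    exact ENNReal.tsum_const_eq_top_of_ne_zero one_ne_zero
  · rw [Metric.tendsto_nhds]
    intro δ hδ
    obtain ⟨m, hm⟩ := exists_nat_gt (Real.exp (2 / δ))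
    have hδ2 : (0:ℝ) < 2 / δ := by positivity
    have hm1 : (1:ℝ) < m := by
      have := Real.add_one_le_exp (2 / δ)
      linarith
    have hlogm : 2 / δ < Real.log m := (Real.lt_log_iff_exp_lt (by linarith)).2 hm
    have hlogm0 : 0 < Real.log m := lt_trans hδ2 hlogm
    set r : ℝ := Real.exp (-(2 * (m + 3) / δ + 1)) with hr
    have hr0 : 0 < r := Real.exp_pos _
    filter_upwards [Ioo_mem_nhdsGT_of_mem (Set.left_mem_Ico.2 hr0)] with ε hεmem
    obtain ⟨hε0, hεr⟩ := hεmem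
    set L : ℝ := Real.log (1 / ε) with hL
    have hLlog : L = -Real.log ε := by rw [hL, one_div, Real.log_inv]
    have hmpos : (0:ℝ) < (m:ℝ) + 3 := by positivity
    have hLlarge : 2 * ((m:ℝ) + 3) / δ + 1 < L := by
      have h0 := Real.log_lt_log hε0 hεr
      rw [hr, Real.log_exp] at h0
      rw [hLlog]
      linarith
    have hL0 : 0 < L := by
      have : (0:ℝ) < 2 * ((m:ℝ) + 3) / δ := by positivity
      linarith
    set j : ℕ := ⌈L / Real.log m⌉₊ with hj
    set K : ℕ := m + j with hK2
    have hfac : (m:ℝ) ^ j ≤ ((K + 1).factorial : ℝ) := by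
      have h1 : m ^ j ≤ (m + j).factorial := pow_le_factorial_add m j
      have h2 : (m + j).factorial ≤ (K + 1).factorial := Nat.factorial_le (by omega)
      exact_mod_cast le_trans h1 h2
    have hKε : (1:ℝ) ≤ ε * (K + 1).factorial := by
      have hjL : L / Real.log m ≤ (j:ℝ) := Nat.le_ceil _
      have h3 : L ≤ (j:ℝ) * Real.log m := by
        rw [div_le_iff₀ hlogm0] at hjL; linarith
      have h4 : 1 / ε ≤ (m:ℝ) ^ j := by
        have he : 1 / ε = Real.exp L := by rw [hL, Real.exp_log (by positivity)]
        rw [he]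
        calc Real.exp L ≤ Real.exp ((j:ℝ) * Real.log m) := Real.exp_le_exp.2 h3
        _ = (m:ℝ) ^ j := by rw [Real.exp_nat_mul, Real.exp_log (by linarith)]
      have h5 : 1 / ε ≤ ((K + 1).factorial : ℝ) := le_trans h4 hfac
      rw [div_le_iff₀ hε0] at h5
      linarith
    have hbound := main_bound K ε hε0 hKε
    have hT : (∑' n : ℕ, ENNReal.ofReal (min (((1:ℝ) / (n + 1).factorial) ^ 2) (ε ^ 2))).toReal
        ≤ ((K:ℝ) + 2) * ε ^ 2 := ENNReal.toReal_le_of_le_ofReal (by positivity) hbound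
    have hρε : ρ ε = (∑' n : ℕ,
        ENNReal.ofReal (min (((1:ℝ) / (n + 1).factorial) ^ 2) (ε ^ 2))).toReal / (ε ^ 2 * L) := by
      rw [hρ ε, hint ε]
    have hρnonneg : 0 ≤ ρ ε := by
      rw [hρε]
      apply div_nonneg ENNReal.toReal_nonneg
      positivity
    have hd : (0:ℝ) < ε ^ 2 * L := mul_pos (pow_pos hε0 2) hL0
    have hρle : ρ ε ≤ ((K:ℝ) + 2) / L := by
      rw [hρε]
      have heq : ((K:ℝ) + 2) / L = (((K:ℝ) + 2) * ε ^ 2) / (ε ^ 2 * L) := by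
        rw [mul_comm (ε ^ 2) L, mul_div_mul_right _ _ (ne_of_gt (pow_pos hε0 2))]
      rw [heq]
      exact div_le_div_of_nonneg_right hT hd.le
    have hjlt : (j:ℝ) < L / Real.log m + 1 := Nat.ceil_lt_add_one (by positivity)
    have hfinal : ((K:ℝ) + 2) / L < δ := by
      have hKlt : ((K:ℝ) + 2) < ((m:ℝ) + 3) + L / Real.log m := by
        have hKc : (K:ℝ) = (m:ℝ) + (j:ℝ) := by rw [hK2]; push_cast; ring
        rw [hKc]; linarith
      have h6 : ((K:ℝ) + 2) / L < (((m:ℝ) + 3) + L / Real.log m) / L :=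
        div_lt_div_of_pos_right hKlt hL0
      have h7 : (((m:ℝ) + 3) + L / Real.log m) / L = ((m:ℝ) + 3) / L + 1 / Real.log m := by
        rw [add_div]
        congr 1
        rw [div_right_comm, div_self (ne_of_gt hL0)]
      have h8 : ((m:ℝ) + 3) / L < δ / 2 := by
        rw [div_lt_iff₀ hL0]
        have heq2 : δ / 2 * (2 * ((m:ℝ) + 3) / δ + 1) = ((m:ℝ) + 3) + δ / 2 := by
          field_simp
        nlinarith [mul_lt_mul_of_pos_left hLlarge (half_pos hδ)]
      have h9 : 1 / Real.log m < δ / 2 := by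
        rw [div_lt_iff₀ hlogm0]
        have heq3 : δ / 2 * (2 / δ) = 1 := by field_simp
        nlinarith [mul_lt_mul_of_pos_left hlogm (half_pos hδ)]
      rw [h7] at h6
      linarith
    rw [Real.dist_0_eq_abs, abs_of_nonneg hρnonneg]
    linarith
end

section
/- Let Π = Σ_{n≥1} n δ_{1/n!} on ℝ and t > 0. Define ψ(z) = t Σ_{n≥1} n (e^{iz/n!} − 1 − iz/n!) (the Lévy exponent of the corresponding compensated compound Poisson process at time t). Then |exp(ψ(2π N!))| → 1 as N → ∞; in particular exp(ψ(z)) does not tend to 0 as z → ∞. -/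
open Filter Complex

private lemma cfnv_nat_ineq (N k : ℕ) :
    (N + k + 1) * N.factorial ^ 2 * (N + 1) ^ (k + 1) ≤ (N + k + 1).factorial ^ 2 := by
  have h1 : N.factorial * (N + 1) ^ k ≤ (N + k).factorial :=
    Nat.factorial_mul_pow_le_factorial
  have h3 : (N.factorial * (N + 1) ^ k) ^ 2 ≤ (N + k).factorial ^ 2 :=
    Nat.pow_le_pow_left h1 2
  have h2 : (N + k + 1).factorial = (N + k + 1) * (N + k).factorial := Nat.factorial_succ _
  have h4 : (N + 1) * (N + 1) ^ k ≤ (N + k + 1) * ((N + 1) ^ k * (N + 1) ^ k) := by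
    have : (1 : ℕ) ≤ (N + 1) ^ k := Nat.one_le_pow _ _ (Nat.succ_pos _)
    calc (N + 1) * (N + 1) ^ k ≤ (N + k + 1) * (N + 1) ^ k :=
          Nat.mul_le_mul_right _ (by omega)
      _ = (N + k + 1) * ((N + 1) ^ k * 1) := by ring
      _ ≤ (N + k + 1) * ((N + 1) ^ k * (N + 1) ^ k) := by
          exact Nat.mul_le_mul_left _ (Nat.mul_le_mul_left _ this)
  calc (N + k + 1) * N.factorial ^ 2 * (N + 1) ^ (k + 1)
      = (N + k + 1) * (N.factorial ^ 2 * ((N + 1) * (N + 1) ^ k)) := by ring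
    _ ≤ (N + k + 1) * (N.factorial ^ 2 * ((N + k + 1) * ((N + 1) ^ k * (N + 1) ^ k))) :=
        Nat.mul_le_mul_left _ (Nat.mul_le_mul_left _ h4)
    _ = (N + k + 1) ^ 2 * (N.factorial * (N + 1) ^ k) ^ 2 := by ring
    _ ≤ (N + k + 1) ^ 2 * (N + k).factorial ^ 2 := Nat.mul_le_mul_left _ h3
    _ = (N + k + 1).factorial ^ 2 := by rw [h2]; ring

private lemma cfnv_key (x : ℝ) :
    ‖Complex.exp ((x : ℂ) * Complex.I) - 1 - (x : ℂ) * Complex.I‖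
      ≤ x ^ 2 / 2 + 2 * |x| := by
  have h := Complex.norm_le_abs_re_add_abs_im
    (Complex.exp ((x : ℂ) * Complex.I) - 1 - (x : ℂ) * Complex.I)
  have hre : (Complex.exp ((x : ℂ) * Complex.I) - 1 - (x : ℂ) * Complex.I).re
      = Real.cos x - 1 := by
    simp [Complex.sub_re, Complex.exp_ofReal_mul_I_re, Complex.mul_re]
  have him : (Complex.exp ((x : ℂ) * Complex.I) - 1 - (x : ℂ) * Complex.I).im
      = Real.sin x - x := by
    simp [Complex.sub_im, Complex.exp_ofReal_mul_I_im, Complex.mul_im]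
  rw [hre, him] at h
  have h1 : |Real.cos x - 1| ≤ x ^ 2 / 2 := by
    rw [abs_sub_comm, _root_.abs_of_nonneg (by linarith [Real.cos_le_one x] : (0:ℝ) ≤ 1 - Real.cos x)]
    linarith [Real.one_sub_sq_div_two_le_cos (x := x)]
  have h2 : |Real.sin x - x| ≤ 2 * |x| := by
    calc |Real.sin x - x| ≤ |Real.sin x| + |x| := abs_sub _ _
      _ ≤ |x| + |x| := by linarith [Real.abs_sin_le_abs (x := x)]
      _ = 2 * |x| := by ring
  linarith

theorem char_fun_not_vanishing_at_infinity (t : ℝ) (ht : 0 < t)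
    (ψ : ℝ → ℂ)
    (hψ : ∀ z : ℝ, ψ z = t * ∑' n : ℕ, ((n : ℂ) + 1) *
      (Complex.exp (Complex.I * z / ((n + 1).factorial : ℝ)) - 1 -
        Complex.I * z / ((n + 1).factorial : ℝ))) :
    Tendsto (fun N : ℕ => ‖Complex.exp (ψ (2 * Real.pi * N.factorial))‖)
      atTop (nhds 1) ∧
    ¬ Tendsto (fun z : ℝ => Complex.exp (ψ z)) atTop (nhds 0) := by
  set f : ℝ → ℕ → ℂ := fun z n => ((n : ℂ) + 1) *
      (Complex.exp (Complex.I * z / ((n + 1).factorial : ℝ)) - 1 -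
        Complex.I * z / ((n + 1).factorial : ℝ)) with hf
  -- rewrite each term in a convenient real form
  have hrw : ∀ (z : ℝ) (n : ℕ), f z n =
      ((((n : ℝ) + 1) : ℝ) : ℂ) *
        (Complex.exp ((↑(z / ((n + 1).factorial : ℝ)) : ℂ) * Complex.I) - 1 -
          (↑(z / ((n + 1).factorial : ℝ)) : ℂ) * Complex.I) := by
    intro z n
    have hne : (((n + 1).factorial : ℝ) : ℂ) ≠ 0 :=
      Complex.ofReal_ne_zero.mpr (Nat.cast_ne_zero.mpr (Nat.factorial_ne_zero _))
    simp only [hf]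
    have : (Complex.I * (z : ℂ) / (((n + 1).factorial : ℝ) : ℂ))
        = (↑(z / ((n + 1).factorial : ℝ)) : ℂ) * Complex.I := by
      push_cast
      field_simp
    rw [this]
    norm_cast
  -- summability
  have hsumm : ∀ z : ℝ, Summable (f z) := by
    intro z
    apply Summable.of_norm_bounded
      (g := fun n : ℕ => (|z| ^ 2 / 2 + 2 * |z|) * (1 / n.factorial))
    · have := (Real.summable_pow_div_factorial 1).mul_left (|z| ^ 2 / 2 + 2 * |z|)
      simpa using this
    · intro n
      rw [hrw]
      have hfac : (0 : ℝ) < (n + 1).factorial := by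
        exact_mod_cast (n + 1).factorial_pos
      have hfac' : ((n + 1).factorial : ℝ) = ((n : ℝ) + 1) * n.factorial := by
        rw [Nat.factorial_succ]; push_cast; ring
      have hnfac : (0 : ℝ) < n.factorial := by exact_mod_cast n.factorial_pos
      set x : ℝ := z / ((n + 1).factorial : ℝ) with hx
      rw [norm_mul]
      have h1 : ‖((((n : ℝ) + 1) : ℝ) : ℂ)‖ = (n : ℝ) + 1 := by
        rw [Complex.norm_real, Real.norm_eq_abs, _root_.abs_of_nonneg (by positivity)]
      rw [h1]
      have h2 : ‖Complex.exp ((x : ℂ) * Complex.I) - 1 - (x : ℂ) * Complex.I‖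
          ≤ x ^ 2 / 2 + 2 * |x| := cfnv_key x
      calc ((n : ℝ) + 1) * ‖Complex.exp ((x : ℂ) * Complex.I) - 1 - (x : ℂ) * Complex.I‖
          ≤ ((n : ℝ) + 1) * (x ^ 2 / 2 + 2 * |x|) :=
            mul_le_mul_of_nonneg_left h2 (by positivity)
        _ ≤ (|z| ^ 2 / 2 + 2 * |z|) * (1 / n.factorial) := by
            rw [hx, hfac']
            have hxabs : |z / (((n : ℝ) + 1) * n.factorial)| =
                |z| / (((n : ℝ) + 1) * n.factorial) := by
              rw [abs_div, _root_.abs_of_pos (by positivity : (0:ℝ) < ((n : ℝ) + 1) * n.factorial)]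
            have hn1 : (1 : ℝ) ≤ (n : ℝ) + 1 := by
              have := Nat.cast_nonneg (α := ℝ) n; linarith
            have hn2 : (1 : ℝ) ≤ (n.factorial : ℝ) := by
              exact_mod_cast Nat.one_le_iff_ne_zero.mpr (Nat.factorial_ne_zero n)
            have e1 : ((n : ℝ) + 1) * ((z / (((n : ℝ) + 1) * n.factorial)) ^ 2 / 2 +
                  2 * |z / (((n : ℝ) + 1) * n.factorial)|)
                = |z| ^ 2 / (2 * (((n : ℝ) + 1) * (n.factorial : ℝ) ^ 2)) +
                  2 * |z| / n.factorial := by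
              rw [hxabs, div_pow, _root_.sq_abs z]
              field_simp
            have e2 : (|z| ^ 2 / 2 + 2 * |z|) * (1 / (n.factorial : ℝ))
                = |z| ^ 2 / (2 * (n.factorial : ℝ)) + 2 * |z| / n.factorial := by
              field_simp
            have key : |z| ^ 2 / (2 * (((n : ℝ) + 1) * (n.factorial : ℝ) ^ 2))
                ≤ |z| ^ 2 / (2 * (n.factorial : ℝ)) := by
              gcongr
              nlinarith
            rw [e1, e2]
            linarith
  -- real part of each term
  have hre : ∀ (z : ℝ) (n : ℕ), (f z n).re
      = ((n : ℝ) + 1) * (Real.cos (z / ((n + 1).factorial : ℝ)) - 1) := by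
    intro z n
    rw [hrw, Complex.re_ofReal_mul]
    congr 1
    simp only [Complex.sub_re, Complex.exp_ofReal_mul_I_re, Complex.one_re,
      Complex.mul_re, Complex.I_re, Complex.I_im, Complex.ofReal_re, Complex.ofReal_im]
    ring
  -- the real-part sums
  set u : ℝ → ℕ → ℝ := fun z n =>
    ((n : ℝ) + 1) * (Real.cos (z / ((n + 1).factorial : ℝ)) - 1) with hu
  have husumm : ∀ z : ℝ, Summable (u z) := by
    intro z
    have : Summable fun n => (f z n).re := (Complex.hasSum_re (hsumm z).hasSum).summable
    apply this.congr
    intro n; rw [hre]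
  have habs : ∀ z : ℝ, ‖Complex.exp (ψ z)‖ = Real.exp (t * ∑' n, u z n) := by
    intro z
    rw [Complex.norm_exp, hψ]
    congr 1
    have : ((t : ℂ) * ∑' n, f z n).re = t * (∑' n, f z n).re := by
      simp [Complex.mul_re]
    rw [this, Complex.re_tsum (hsumm z)]
    congr 1
    exact tsum_congr fun n => hre z n
  -- key estimate on the tail sums
  have hbound : ∀ N : ℕ, 1 ≤ N →
      -(2 * Real.pi ^ 2) * (N : ℝ)⁻¹ ≤ ∑' n, u (2 * Real.pi * N.factorial) n := by
    intro N hN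
    set z : ℝ := 2 * Real.pi * N.factorial with hz
    -- terms with n < N vanish
    have hzero : ∀ n < N, u z n = 0 := by
      intro n hn
      obtain ⟨k, hk⟩ := Nat.factorial_dvd_factorial (Nat.succ_le_of_lt hn)
      have hfacpos : (0 : ℝ) < (n + 1).factorial := by
        exact_mod_cast (n + 1).factorial_pos
      have : z / ((n + 1).factorial : ℝ) = (k : ℝ) * (2 * Real.pi) := by
        rw [hz, hk]
        push_cast
        field_simp
      simp only [hu, this, Real.cos_nat_mul_two_pi]
      ring
    have hsN : Summable (fun k : ℕ => u z (N + k)) := by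
      have := (summable_nat_add_iff N).2 (husumm z)
      apply this.congr
      intro k; rw [add_comm]
    have hsplit : ∑' n, u z n = ∑' k, u z (N + k) := by
      rw [← Summable.sum_add_tsum_nat_add N (husumm z)]
      rw [Finset.sum_eq_zero fun i hi => hzero i (Finset.mem_range.mp hi), zero_add]
      apply tsum_congr
      intro k
      rw [add_comm]
    -- geometric tail
    have hr0 : (0 : ℝ) ≤ ((N : ℝ) + 1)⁻¹ := by positivity
    have hr1 : ((N : ℝ) + 1)⁻¹ < 1 := by
      rw [inv_lt_one_iff₀]
      right
      have : (1 : ℝ) ≤ (N : ℝ) := by exact_mod_cast hN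
      linarith
    have hgs : Summable (fun k : ℕ => 2 * Real.pi ^ 2 * ((N : ℝ) + 1)⁻¹ ^ (k + 1)) := by
      have := (summable_geometric_of_lt_one hr0 hr1).mul_left
        (2 * Real.pi ^ 2 * ((N : ℝ) + 1)⁻¹)
      apply this.congr
      intro k
      rw [pow_succ]
      ring
    -- per-term bound
    have hterm : ∀ k : ℕ, |u z (N + k)| ≤ 2 * Real.pi ^ 2 * ((N : ℝ) + 1)⁻¹ ^ (k + 1) := by
      intro k
      have hmf : (0 : ℝ) < ((N + k + 1).factorial : ℝ) := by
        exact_mod_cast (N + k + 1).factorial_pos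
      have hcos : ∀ y : ℝ, |Real.cos y - 1| ≤ y ^ 2 / 2 := fun y => by
        rw [abs_sub_comm,
          _root_.abs_of_nonneg (by linarith [Real.cos_le_one y] : (0:ℝ) ≤ 1 - Real.cos y)]
        linarith [Real.one_sub_sq_div_two_le_cos (x := y)]
      have hux : |u z (N + k)| ≤
          ((N : ℝ) + k + 1) * ((z / ((N + k + 1).factorial : ℝ)) ^ 2 / 2) := by
        simp only [hu]
        rw [abs_mul]
        have h1 : |((N + k : ℕ) : ℝ) + 1| = (N : ℝ) + k + 1 := by
          rw [_root_.abs_of_nonneg (by positivity : (0:ℝ) ≤ ((N + k : ℕ) : ℝ) + 1)]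
          push_cast; ring
        rw [h1]
        exact mul_le_mul_of_nonneg_left (hcos _) (by positivity)
      have hx2 : (z / ((N + k + 1).factorial : ℝ)) ^ 2
          = 4 * Real.pi ^ 2 * (N.factorial : ℝ) ^ 2 / ((N + k + 1).factorial : ℝ) ^ 2 := by
        rw [hz]; field_simp; ring
      have hcast : ((N : ℝ) + k + 1) * (N.factorial : ℝ) ^ 2 * ((N : ℝ) + 1) ^ (k + 1)
          ≤ ((N + k + 1).factorial : ℝ) ^ 2 := by
        exact_mod_cast cfnv_nat_ineq N k
      calc |u z (N + k)|
          ≤ ((N : ℝ) + k + 1) * ((z / ((N + k + 1).factorial : ℝ)) ^ 2 / 2) := hux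
        _ = 2 * Real.pi ^ 2 * (((N : ℝ) + k + 1) * (N.factorial : ℝ) ^ 2 /
              ((N + k + 1).factorial : ℝ) ^ 2) := by rw [hx2]; ring
        _ ≤ 2 * Real.pi ^ 2 * ((N : ℝ) + 1)⁻¹ ^ (k + 1) := by
            apply mul_le_mul_of_nonneg_left _ (by positivity)
            rw [div_le_iff₀ (by positivity), inv_pow, inv_mul_eq_div,
              le_div_iff₀ (by positivity)]
            exact hcast
    have htail : ∑' k, |u z (N + k)| ≤ 2 * Real.pi ^ 2 * (N : ℝ)⁻¹ := by
      have h1 : ∑' k, |u z (N + k)| ≤ ∑' k, 2 * Real.pi ^ 2 * ((N : ℝ) + 1)⁻¹ ^ (k + 1) :=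
        Summable.tsum_le_tsum hterm hsN.abs hgs
      have h2 : ∑' k : ℕ, 2 * Real.pi ^ 2 * ((N : ℝ) + 1)⁻¹ ^ (k + 1)
          = 2 * Real.pi ^ 2 * (N : ℝ)⁻¹ := by
        have hNpos : (0 : ℝ) < N := by exact_mod_cast Nat.lt_of_lt_of_le Nat.zero_lt_one hN
        have : ∀ k : ℕ, 2 * Real.pi ^ 2 * ((N : ℝ) + 1)⁻¹ ^ (k + 1)
            = (2 * Real.pi ^ 2 * ((N : ℝ) + 1)⁻¹) * ((N : ℝ) + 1)⁻¹ ^ k := by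
          intro k; rw [pow_succ]; ring
        rw [tsum_congr this, tsum_mul_left, tsum_geometric_of_lt_one hr0 hr1]
        field_simp
        try ring
        exact mul_inv_cancel₀ hNpos.ne'
      linarith
    rw [hsplit]
    have := (Summable.tsum_le_tsum (fun k => neg_abs_le (u z (N + k))) hsN.abs.neg hsN)
    rw [tsum_neg] at this
    calc -(2 * Real.pi ^ 2) * (N : ℝ)⁻¹ = -(2 * Real.pi ^ 2 * (N : ℝ)⁻¹) := by ring
      _ ≤ -∑' k, |u z (N + k)| := by linarith
      _ ≤ ∑' k, u z (N + k) := this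
  -- the sums are nonpositive
  have hnonpos : ∀ z : ℝ, ∑' n, u z n ≤ 0 := by
    intro z
    apply tsum_nonpos
    intro n
    simp only [hu]
    have := Real.cos_le_one (z / ((n + 1).factorial : ℝ))
    nlinarith [Nat.cast_nonneg (α := ℝ) n]
  -- squeeze
  have hS : Tendsto (fun N : ℕ => ∑' n, u (2 * Real.pi * N.factorial) n) atTop (nhds 0) := by
    apply tendsto_of_tendsto_of_tendsto_of_le_of_le'
      (g := fun N : ℕ => -(2 * Real.pi ^ 2) * (N : ℝ)⁻¹) (h := fun _ : ℕ => (0 : ℝ))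
    · have : Tendsto (fun N : ℕ => (N : ℝ)⁻¹) atTop (nhds 0) := tendsto_inv_atTop_zero.comp
        tendsto_natCast_atTop_atTop
      have := this.const_mul (-(2 * Real.pi ^ 2))
      simpa using this
    · exact tendsto_const_nhds
    · filter_upwards [eventually_ge_atTop 1] with N hN using hbound N hN
    · filter_upwards with N using hnonpos _
  have goal1 : Tendsto (fun N : ℕ => ‖Complex.exp (ψ (2 * Real.pi * N.factorial))‖)
      atTop (nhds 1) := by
    have : Tendsto (fun N : ℕ => Real.exp (t * ∑' n, u (2 * Real.pi * N.factorial) n))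
        atTop (nhds 1) := by
      have h1 := (hS.const_mul t)
      have h2 := (Real.continuous_exp.tendsto (t * 0)).comp h1
      simpa [Function.comp_def] using h2
    apply this.congr
    intro N
    rw [habs]
  refine ⟨goal1, ?_⟩
  intro hcontra
  have hz : Tendsto (fun N : ℕ => 2 * Real.pi * (N.factorial : ℝ)) atTop atTop := by
    apply Tendsto.const_mul_atTop (by positivity)
    exact tendsto_natCast_atTop_atTop.comp factorial_tendsto_atTop
  have h0 : Tendsto (fun N : ℕ => Complex.exp (ψ (2 * Real.pi * N.factorial)))
      atTop (nhds 0) := hcontra.comp hz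
  have h0' : Tendsto (fun N : ℕ => ‖Complex.exp (ψ (2 * Real.pi * N.factorial))‖)
      atTop (nhds 0) := by
    have := (continuous_norm.tendsto 0).comp h0
    simpa [Function.comp_def] using this
  exact one_ne_zero (tendsto_nhds_unique goal1 h0')
end

section
/- Let Π be a Lévy measure on ℝ with Π(|u| > 1) = 0, let A ≠ 0, t > 0, β = e^{−|A|t}, and let φ(z) = exp(∫₀ᵗ ∫_ℝ [cos(e^{(t−s)A} u z) − 1] Π(du) ds) be the modulus of the characteristic function of X(t) = ∫₀ᵗ∫ e^{(t−s)A} u ν̃(ds,du). Then there exists a constant C₃ > 0 (depending on A, t) such that |φ(z)| ≤ (β/|z|)^{C₃ ρ(β/|z|)} for all z ≠ 0, where ρ(ε) = [ε² ln(1/ε)]^{−1} ∫_ℝ (u² ∧ ε²) Π(du). -/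
set_option maxHeartbeats 1000000

open MeasureTheory Filter

open intervalIntegral in
lemma cos_sub_one_le_neg_sq {x : ℝ} (hx : |x| ≤ 1) :
    Real.cos x - 1 ≤ -((2 / Real.pi ^ 2) * x ^ 2) := by
  have h := Real.cos_le_one_sub_mul_cos_sq (x := x) (hx.trans (by linarith [Real.pi_gt_three]))
  linarith

open intervalIntegral in
lemma key_interval (R p0 : ℝ) (hR : 1 < R) (hp0 : 0 < p0) :
    ∃ c0 : ℝ, 0 < c0 ∧ ∀ p : ℝ, p0 ≤ p → c0 ≤ ∫ v in p..(R * p), (1 - Real.cos v) / v := by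
  set m : ℝ := min (p0 * (R - 1) / 2) 2 with hm
  have hmpos : 0 < m := lt_min (by nlinarith) two_pos
  have hm2 : m ≤ 2 := min_le_right _ _
  set δ : ℝ := m - Real.sin m with hδ
  have hδpos : 0 < δ := sub_pos.2 (Real.sin_lt hmpos)
  have hminpos : 0 < min 1 δ := lt_min one_pos hδpos
  have hmin1 : min 1 δ ≤ 1 := min_le_left _ _
  have hminδ : min 1 δ ≤ δ := min_le_right _ _
  have hc0pos : 0 < (R - 1) / (2 * R) * min 1 δ :=
    mul_pos (div_pos (by linarith) (by linarith)) hminpos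
  refine ⟨(R - 1) / (2 * R) * min 1 δ, hc0pos, fun p hp => ?_⟩
  have hppos : 0 < p := lt_of_lt_of_le hp0 hp
  have hq : p ≤ R * p := by nlinarith
  have hqpos : 0 < R * p := by positivity
  set x : ℝ := p * (R - 1) / 2 with hx
  have hxpos : 0 < x := by rw [hx]; nlinarith
  -- step 1 : pointwise comparison
  have h1 : ∫ v in p..(R * p), (1 - Real.cos v) / (R * p) ≤
      ∫ v in p..(R * p), (1 - Real.cos v) / v := by
    apply integral_mono_on hq
    · exact (Continuous.intervalIntegrable (by continuity) _ _)
    · apply ContinuousOn.intervalIntegrable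
      apply ContinuousOn.div
      · fun_prop
      · fun_prop
      · intro v hv
        rw [Set.uIcc_of_le hq] at hv
        exact ne_of_gt (lt_of_lt_of_le hppos hv.1)
    · intro v hv
      apply div_le_div_of_nonneg_left _ (lt_of_lt_of_le hppos hv.1) hv.2
      have := Real.cos_le_one v; linarith
  -- compute the lhs
  have h2 : ∫ v in p..(R * p), (1 - Real.cos v) / (R * p)
      = ((R * p - p) - (Real.sin (R * p) - Real.sin p)) / (R * p) := by
    rw [_root_.intervalIntegral.integral_div]
    congr 1
    have heq : ∫ v in p..(R * p), (1 - Real.cos v) =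
        (∫ v in p..(R * p), (1:ℝ)) - ∫ v in p..(R * p), Real.cos v :=
      integral_sub (Continuous.intervalIntegrable (by continuity) _ _)
        (Continuous.intervalIntegrable (by continuity) _ _)
    rw [heq, integral_cos, integral_one]
  -- step 2
  have hsin : Real.sin (R * p) - Real.sin p ≤ 2 * |Real.sin x| := by
    rw [Real.sin_sub_sin]
    have h1 : (R * p - p) / 2 = x := by rw [hx]; ring
    rw [h1]
    calc 2 * Real.sin x * Real.cos ((R * p + p) / 2)
        ≤ |2 * Real.sin x * Real.cos ((R * p + p) / 2)| := le_abs_self _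
      _ = 2 * |Real.sin x| * |Real.cos ((R * p + p) / 2)| := by
          rw [abs_mul, abs_mul, abs_two]
      _ ≤ 2 * |Real.sin x| * 1 := by
          have := Real.abs_cos_le_one ((R * p + p) / 2)
          have := abs_nonneg (Real.sin x)
          nlinarith
      _ = 2 * |Real.sin x| := by ring
  -- step 3 : x - |sin x| ≥ x * min 1 δ / 2
  have h3 : x * min 1 δ / 2 ≤ x - |Real.sin x| := by
    rcases le_or_gt 2 x with hx2 | hx2
    · have h4 : |Real.sin x| ≤ 1 := Real.abs_sin_le_one x
      nlinarith
    · have hmx : m ≤ x := le_trans (min_le_left _ _) (by rw [hx]; nlinarith)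
      have hlip : Real.sin x - Real.sin m ≤ x - m := by
        rw [Real.sin_sub_sin]
        have h4 : |Real.sin ((x - m) / 2)| ≤ (x - m) / 2 :=
          le_trans (Real.abs_sin_le_abs) (le_of_eq (abs_of_nonneg (by linarith)))
        calc 2 * Real.sin ((x - m) / 2) * Real.cos ((x + m) / 2)
            ≤ |2 * Real.sin ((x - m) / 2) * Real.cos ((x + m) / 2)| := le_abs_self _
          _ = 2 * (|Real.sin ((x - m) / 2)| * |Real.cos ((x + m) / 2)|) := by
              rw [abs_mul, abs_mul, abs_two]; ring
          _ ≤ 2 * ((x - m) / 2 * 1) := by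
              have h6 := Real.abs_cos_le_one ((x + m) / 2)
              have h7 := abs_nonneg (Real.sin ((x - m) / 2))
              have h8 := abs_nonneg (Real.cos ((x + m) / 2))
              nlinarith
          _ = x - m := by ring
      have hsx : |Real.sin x| = Real.sin x := abs_of_nonneg
        (Real.sin_nonneg_of_nonneg_of_le_pi hxpos.le (by linarith [Real.pi_gt_three]))
      rw [hsx]
      nlinarith
  -- conclude
  have hnum : x * min 1 δ ≤ (R * p - p) - (Real.sin (R * p) - Real.sin p) := by
    have h2x : R * p - p = 2 * x := by rw [hx]; ring
    nlinarith [abs_nonneg (Real.sin x)]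
  calc (R - 1) / (2 * R) * min 1 δ
      ≤ ((R * p - p) - (Real.sin (R * p) - Real.sin p)) / (R * p) := by
        rw [le_div_iff₀ hqpos]
        have hxRp : (R - 1) / (2 * R) * min 1 δ * (R * p) = x * min 1 δ := by
          rw [hx]; field_simp
        rw [hxRp]; exact hnum
    _ = ∫ v in p..(R * p), (1 - Real.cos v) / (R * p) := h2.symm
    _ ≤ ∫ v in p..(R * p), (1 - Real.cos v) / v := h1

open intervalIntegral in
lemma subst_cos (A t a : ℝ) (hA : A ≠ 0) (ha : 0 < a) :
    ∫ s in (0:ℝ)..t, (Real.cos (Real.exp ((t - s) * A) * a) - 1)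
      = ∫ v in (Real.exp (t * A) * a)..a, (Real.cos v - 1) / (-A * v) := by
  have key := intervalIntegral.integral_comp_smul_deriv' (a := (0:ℝ)) (b := t)
    (f := fun s => Real.exp ((t - s) * A) * a)
    (f' := fun s => (-A) * (Real.exp ((t - s) * A) * a))
    (g := fun v => (Real.cos v - 1) / (-A * v))
    (fun s _ => by
      have h1 : HasDerivAt (fun s : ℝ => (t - s) * A) (-A) s := by
        simpa using ((hasDerivAt_id s).const_sub t).mul_const A
      have h2 := (h1.exp).mul_const a
      rw [show (-A) * (Real.exp ((t - s) * A) * a) = Real.exp ((t - s) * A) * -A * a by ring]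
      exact h2)
    (by fun_prop)
    (by
      apply ContinuousOn.mono (s := {v : ℝ | 0 < v})
      · apply ContinuousOn.div
        · fun_prop
        · fun_prop
        · intro v hv
          have : (0:ℝ) < v := hv
          intro h
          rcases mul_eq_zero.1 h with h' | h'
          · exact hA (by linarith [neg_eq_zero.1 h'])
          · exact this.ne' h'
      · rintro w ⟨s, _, rfl⟩
        exact mul_pos (Real.exp_pos _) ha)
  have heq : ∀ s : ℝ, (fun s => (-A) * (Real.exp ((t - s) * A) * a)) s •
      ((fun v => (Real.cos v - 1) / (-A * v)) ∘ fun s => Real.exp ((t - s) * A) * a) s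
      = Real.cos (Real.exp ((t - s) * A) * a) - 1 := by
    intro s
    have hne : -A * (Real.exp ((t - s) * A) * a) ≠ 0 := by
      apply mul_ne_zero (neg_ne_zero.2 hA) (by positivity)
    simp only [Function.comp_apply, smul_eq_mul]
    field_simp
  simp only [heq] at key
  rw [key]
  norm_num

open intervalIntegral in
lemma flow_bound (A t : ℝ) (hA : A ≠ 0) (ht : 0 < t) :
    ∃ C2 : ℝ, 0 < C2 ∧ ∀ a : ℝ, Real.exp (-|A| * t) ≤ |a| →
      ∫ s in Set.Ioc (0:ℝ) t, (Real.cos (Real.exp ((t - s) * A) * a) - 1) ≤ -C2 := by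
  obtain ⟨c0, hc0, hkey⟩ := key_interval (Real.exp (|A| * t))
    (Real.exp (-|A| * t) * Real.exp (-|A| * t))
    (by rw [Real.one_lt_exp_iff]; positivity) (by positivity)
  refine ⟨c0 / |A|, div_pos hc0 (abs_pos.2 hA), fun a ha => ?_⟩
  -- reduce to |a|
  have hapos : 0 < |a| := lt_of_lt_of_le (Real.exp_pos _) ha
  have hcos : ∀ s : ℝ, Real.cos (Real.exp ((t - s) * A) * a)
      = Real.cos (Real.exp ((t - s) * A) * |a|) := by
    intro s
    rcases abs_cases a with ⟨h1, _⟩ | ⟨h1, _⟩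
    · rw [h1]
    · rw [h1]; rw [show Real.exp ((t - s) * A) * -a = -(Real.exp ((t - s) * A) * a) by ring,
        Real.cos_neg]
  simp only [hcos]
  set b := |a| with hb
  have hIoc : ∫ s in Set.Ioc (0:ℝ) t, (Real.cos (Real.exp ((t - s) * A) * b) - 1)
      = ∫ s in (0:ℝ)..t, (Real.cos (Real.exp ((t - s) * A) * b) - 1) :=
    (intervalIntegral.integral_of_le ht.le).symm
  rw [hIoc, subst_cos A t b hA hapos]
  -- identity for the integrand
  have hident : ∀ v : ℝ, (Real.cos v - 1) / (-A * v) = A⁻¹ * ((1 - Real.cos v) / v) := by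
    intro v
    rw [show Real.cos v - 1 = -(1 - Real.cos v) by ring, show -A * v = -(A * v) by ring,
      neg_div_neg_eq, div_mul_eq_div_div_swap, div_eq_inv_mul]
  simp only [hident]
  rw [intervalIntegral.integral_const_mul]
  rcases lt_or_gt_of_ne hA with hAneg | hApos
  · -- A < 0 : exp(t*A)*b ≤ b, integral from small to big
    have habs : |A| = -A := abs_of_neg hAneg
    have hR : Real.exp (|A| * t) * (Real.exp (t * A) * b) = b := by
      rw [← mul_assoc, ← Real.exp_add]
      rw [show |A| * t + t * A = (|A| + A) * t by ring, habs]
      norm_num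
    have hp0 : Real.exp (-|A| * t) * Real.exp (-|A| * t) ≤ Real.exp (t * A) * b := by
      have h1 : Real.exp (t * A) = Real.exp (-|A| * t) := by rw [habs]; ring_nf
      rw [h1]
      exact mul_le_mul_of_nonneg_left ha (Real.exp_pos _).le
    have hk := hkey _ hp0
    rw [hR] at hk
    have hAinv : A⁻¹ < 0 := inv_neg''.2 hAneg
    calc A⁻¹ * ∫ v in (Real.exp (t * A) * b)..b, (1 - Real.cos v) / v
        ≤ A⁻¹ * c0 := by
          apply mul_le_mul_of_nonpos_left hk hAinv.le
      _ = -(c0 / |A|) := by rw [habs]; field_simp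
  · -- A > 0 : b ≤ exp(t*A)*b, flip
    have habs : |A| = A := abs_of_pos hApos
    have hflip : ∫ v in (Real.exp (t * A) * b)..b, (1 - Real.cos v) / v
        = -∫ v in b..(Real.exp (t * A) * b), (1 - Real.cos v) / v :=
      intervalIntegral.integral_symm _ _
    have hRb : Real.exp (t * A) * b = Real.exp (|A| * t) * b := by rw [habs]; ring_nf
    have hp0 : Real.exp (-|A| * t) * Real.exp (-|A| * t) ≤ b := by
      calc Real.exp (-|A| * t) * Real.exp (-|A| * t)
          ≤ 1 * Real.exp (-|A| * t) := by
            apply mul_le_mul_of_nonneg_right _ (Real.exp_pos _).le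
            rw [Real.exp_le_one_iff]
            have : (0:ℝ) < |A| * t := by positivity
            linarith
        _ = Real.exp (-|A| * t) := one_mul _
        _ ≤ b := ha
    have hk := hkey b hp0
    rw [hflip, hRb]
    have hAinv : 0 < A⁻¹ := inv_pos.2 hApos
    calc A⁻¹ * -∫ v in b..(Real.exp (|A| * t) * b), (1 - Real.cos v) / v
        ≤ A⁻¹ * -c0 := by
          apply mul_le_mul_of_nonneg_left _ hAinv.le
          linarith
      _ = -(c0 / |A|) := by rw [habs]; field_simp

theorem char_fun_bound_one_dimensional (P : Measure ℝ)
    (hLevy : ∫⁻ u, ENNReal.ofReal (min (u ^ 2) 1) ∂P < ⊤)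
    (hsupp : P {u : ℝ | 1 < |u|} = 0)
    (A t : ℝ) (hA : A ≠ 0) (ht : 0 < t) (β : ℝ) (hβ : β = Real.exp (-|A| * t))
    (ρ : ℝ → ℝ)
    (hρ : ∀ ε : ℝ, ρ ε = (∫⁻ u, ENNReal.ofReal (min (u ^ 2) (ε ^ 2)) ∂P).toReal /
      (ε ^ 2 * Real.log (1 / ε)))
    (φ : ℝ → ℝ)
    (hφ : ∀ z : ℝ, φ z = Real.exp (∫ s in Set.Ioc (0:ℝ) t,
      (∫ u, (Real.cos (Real.exp ((t - s) * A) * u * z) - 1) ∂P))) :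
    ∃ C₃ : ℝ, 0 < C₃ ∧ ∀ z : ℝ, z ≠ 0 →
      φ z ≤ (β / |z|) ^ (C₃ * ρ (β / |z|)) := by
  obtain ⟨C₂, hC₂, hflow⟩ := flow_bound A t hA ht
  have hβpos : 0 < β := hβ ▸ Real.exp_pos _
  have hβ1 : β ≤ 1 := by
    rw [hβ, Real.exp_le_one_iff]
    have : (0:ℝ) ≤ |A| * t := by positivity
    linarith
  set K₁ : ℝ := 2 / Real.pi ^ 2 with hK₁
  have hK₁pos : 0 < K₁ := by have := Real.pi_pos; positivity
  refine ⟨min (t * K₁ * β ^ 4) C₂, lt_min (by positivity) hC₂, fun z hz => ?_⟩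
  set C₃ : ℝ := min (t * K₁ * β ^ 4) C₂ with hC₃
  have hC₃pos : 0 < C₃ := lt_min (by positivity) hC₂
  have hzpos : 0 < |z| := abs_pos.2 hz
  set ε : ℝ := β / |z| with hε
  have hεpos : 0 < ε := div_pos hβpos hzpos
  have hεz : ε * |z| = β := div_mul_cancel₀ _ hzpos.ne'
  -- the two regions
  set S₁ : Set ℝ := {u : ℝ | |u| ≤ min ε 1} with hS₁
  set S₂ : Set ℝ := {u : ℝ | min ε 1 < |u|} ∩ {u : ℝ | |u| ≤ 1} with hS₂
  have hS₁m : MeasurableSet S₁ := measurableSet_le (by fun_prop) measurable_const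
  have hS₂m : MeasurableSet S₂ :=
    (measurableSet_lt measurable_const (by fun_prop)).inter
      (measurableSet_le (by fun_prop) measurable_const)
  have hdisj : Disjoint S₁ S₂ := by
    rw [Set.disjoint_left]
    rintro u hu hu2
    have h1 : |u| ≤ min ε 1 := hu
    exact absurd h1 (not_le.2 hu2.1)
  have hunion : S₁ ∪ S₂ = {u : ℝ | |u| ≤ 1} := by
    ext u
    simp only [hS₁, hS₂, Set.mem_union, Set.mem_inter_iff, Set.mem_setOf_eq]
    constructor
    · rintro (h | ⟨_, h2⟩)
      · exact h.trans (min_le_right _ _)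
      · exact h2
    · intro h
      rcases le_or_gt (|u|) (min ε 1) with h1 | h1
      · exact Or.inl h1
      · exact Or.inr ⟨h1, h⟩
  -- membership facts
  have hS₁uz : ∀ u ∈ S₁, |u * z| ≤ β := by
    intro u hu
    have h1 : |u| ≤ min ε 1 := hu
    rw [abs_mul]
    calc |u| * |z| ≤ ε * |z| :=
          mul_le_mul_of_nonneg_right ((h1.trans (min_le_left _ _))) hzpos.le
      _ = β := hεz
  have hS₂uz : ∀ u ∈ S₂, β ≤ |u * z| := by
    rintro u ⟨hu1, hu2⟩
    have hu1' : min ε 1 < |u| := hu1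
    have hu2' : |u| ≤ 1 := hu2
    have hεle : ε ≤ |u| := by
      rcases le_total ε 1 with h | h
      · rw [min_eq_left h] at hu1'; exact hu1'.le
      · rw [min_eq_right h] at hu1'; linarith
    rw [abs_mul, ← hεz]
    exact mul_le_mul_of_nonneg_right hεle hzpos.le
  -- basic integrability
  have hb_int : Integrable (fun u : ℝ => min (u ^ 2) 1) P := by
    refine ⟨(Continuous.aestronglyMeasurable (by fun_prop)), ?_⟩
    rw [hasFiniteIntegral_iff_ofReal (ae_of_all _ fun u => le_min (sq_nonneg u) one_pos.le)]
    exact hLevy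
  set e : ℝ := Real.exp (|A| * t) with he
  have hepos : 0 < e := Real.exp_pos _
  have heβ : e * β = 1 := by rw [he, hβ, ← Real.exp_add]; ring_nf; exact Real.exp_zero
  set K : ℝ := max (e ^ 2 * z ^ 2) 2 with hK
  have hexp_le : ∀ s ∈ Set.Icc (0:ℝ) t, Real.exp ((t - s) * A) ≤ e := by
    intro s hs
    rw [he]
    apply Real.exp_le_exp.2
    calc (t - s) * A ≤ |(t - s) * A| := le_abs_self _
      _ = |t - s| * |A| := abs_mul _ _
      _ ≤ t * |A| := by
          apply mul_le_mul_of_nonneg_right _ (abs_nonneg A)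
          rw [abs_of_nonneg (by linarith [hs.2] : (0:ℝ) ≤ t - s)]
          linarith [hs.1]
      _ = |A| * t := mul_comm _ _
  have hexp_ge : ∀ s ∈ Set.Icc (0:ℝ) t, β ≤ Real.exp ((t - s) * A) := by
    intro s hs
    rw [hβ]
    apply Real.exp_le_exp.2
    calc -|A| * t = -(|A| * t) := by ring
      _ ≤ -|(t - s) * A| := by
          apply neg_le_neg
          rw [abs_mul, mul_comm]
          apply mul_le_mul_of_nonneg_left _ (abs_nonneg A)
          rw [abs_of_nonneg (by linarith [hs.2] : (0:ℝ) ≤ t - s)]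
          linarith [hs.1]
      _ ≤ (t - s) * A := neg_abs_le _
  have hbound : ∀ s ∈ Set.Icc (0:ℝ) t, ∀ u : ℝ,
      |Real.cos (Real.exp ((t - s) * A) * u * z) - 1| ≤ K * min (u ^ 2) 1 := by
    intro s hs u
    set y := Real.exp ((t - s) * A) * u * z with hy
    have h1 : |Real.cos y - 1| = 1 - Real.cos y := by
      rw [abs_of_nonpos (by linarith [Real.cos_le_one y])]; ring
    have h2 : 1 - Real.cos y ≤ y ^ 2 / 2 := by
      have := Real.one_sub_sq_div_two_le_cos (x := y); linarith
    have h3 : 1 - Real.cos y ≤ 2 := by linarith [Real.neg_one_le_cos y]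
    have hy2 : y ^ 2 ≤ e ^ 2 * u ^ 2 * z ^ 2 := by
      rw [hy]
      have h4 : (Real.exp ((t - s) * A)) ^ 2 ≤ e ^ 2 := by
        apply pow_le_pow_left₀ (Real.exp_pos _).le (hexp_le s hs)
      calc (Real.exp ((t - s) * A) * u * z) ^ 2
          = (Real.exp ((t - s) * A)) ^ 2 * (u ^ 2 * z ^ 2) := by ring
        _ ≤ e ^ 2 * (u ^ 2 * z ^ 2) := by nlinarith [sq_nonneg (u * z), sq_nonneg u, sq_nonneg z]
        _ = e ^ 2 * u ^ 2 * z ^ 2 := by ring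
    rw [h1]
    rcases le_total (u ^ 2) 1 with hu | hu
    · rw [min_eq_left hu]
      calc 1 - Real.cos y ≤ y ^ 2 / 2 := h2
        _ ≤ e ^ 2 * u ^ 2 * z ^ 2 / 2 := by linarith
        _ ≤ e ^ 2 * z ^ 2 * u ^ 2 := by nlinarith [sq_nonneg (e * z), sq_nonneg u, mul_nonneg (mul_nonneg (sq_nonneg e) (sq_nonneg u)) (sq_nonneg z)]
        _ ≤ K * u ^ 2 := mul_le_mul_of_nonneg_right (le_max_left _ _) (sq_nonneg u)
    · rw [min_eq_right hu]
      calc 1 - Real.cos y ≤ 2 := h3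
        _ ≤ K := le_max_right _ _
        _ = K * 1 := (mul_one K).symm
  have hKmin_int : Integrable (fun u : ℝ => K * min (u ^ 2) 1) P := hb_int.const_mul K
  have hfs_int : ∀ s ∈ Set.Icc (0:ℝ) t,
      Integrable (fun u : ℝ => Real.cos (Real.exp ((t - s) * A) * u * z) - 1) P := by
    intro s hs
    exact hKmin_int.mono' (Continuous.aestronglyMeasurable (by fun_prop))
      (ae_of_all _ fun u => by simpa using hbound s hs u)
  -- splitting the inner integral
  have hsplit : ∀ s ∈ Set.Ioc (0:ℝ) t,
      (∫ u, (Real.cos (Real.exp ((t - s) * A) * u * z) - 1) ∂P)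
        = (∫ u in S₁, (Real.cos (Real.exp ((t - s) * A) * u * z) - 1) ∂P)
          + (∫ u in S₂, (Real.cos (Real.exp ((t - s) * A) * u * z) - 1) ∂P) := by
    intro s hs
    have hs' : s ∈ Set.Icc (0:ℝ) t := ⟨hs.1.le, hs.2⟩
    have h1m : MeasurableSet {u : ℝ | |u| ≤ 1} := measurableSet_le (by fun_prop) measurable_const
    have h0 := (integral_add_compl h1m (hfs_int s hs')).symm
    have hcompl : {u : ℝ | |u| ≤ 1}ᶜ = {u : ℝ | 1 < |u|} := by
      ext u; simp [not_le]
    rw [hcompl] at h0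
    have hz0 : P.restrict {u : ℝ | 1 < |u|} = 0 := Measure.restrict_eq_zero.2 hsupp
    rw [show (∫ u in {u : ℝ | 1 < |u|}, (Real.cos (Real.exp ((t - s) * A) * u * z) - 1) ∂P)
        = 0 from by rw [hz0]; exact integral_zero_measure _, add_zero] at h0
    rw [h0, ← hunion,
      setIntegral_union hdisj hS₂m ((hfs_int s hs').integrableOn) ((hfs_int s hs').integrableOn)]
  -- integrability of s ↦ ∫_{S₁} f s u via clamping
  have hclamp_mem : ∀ s : ℝ, min (max s 0) t ∈ Set.Icc (0:ℝ) t :=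
    fun s => ⟨le_min (le_max_right s 0) ht.le, min_le_right _ _⟩
  have hclamp_eq : ∀ s ∈ Set.Ioc (0:ℝ) t, min (max s 0) t = s := by
    intro s hs
    rw [max_eq_left hs.1.le, min_eq_left hs.2]
  have hG₁cont : Continuous fun x : ℝ =>
      ∫ u in S₁, (Real.cos (Real.exp ((t - min (max x 0) t) * A) * u * z) - 1) ∂P := by
    apply continuous_of_dominated (bound := fun u : ℝ => K * min (u ^ 2) 1)
    · exact fun x => Continuous.aestronglyMeasurable (by fun_prop)
    · exact fun x => ae_of_all _ fun u => by
        simpa using hbound _ (hclamp_mem x) u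
    · exact hKmin_int.restrict
    · exact ae_of_all _ fun u => by fun_prop
  have hF₁intOn : IntegrableOn (fun s : ℝ =>
      ∫ u in S₁, (Real.cos (Real.exp ((t - s) * A) * u * z) - 1) ∂P) (Set.Ioc 0 t) := by
    apply (hG₁cont.integrableOn_Ioc).congr
    apply ((ae_restrict_iff' measurableSet_Ioc).2 (ae_of_all _ fun s hs => ?_))
    simp only [hclamp_eq s hs]
  -- region 1 estimate
  have hI₁int : IntegrableOn (fun u : ℝ => u ^ 2) S₁ P := by
    apply (hb_int.restrict (s := S₁)).congr
    apply ((ae_restrict_iff' hS₁m).2 (ae_of_all _ fun u hu => ?_))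
    have h1 : |u| ≤ min ε 1 := hu
    have h2 : u ^ 2 ≤ 1 := by
      have := abs_nonneg u
      have h3 : |u| ≤ 1 := h1.trans (min_le_right _ _)
      nlinarith [sq_abs u]
    exact min_eq_left h2
  set I₁ : ℝ := ∫ u in S₁, u ^ 2 ∂P with hI₁
  have hI₁nonneg : 0 ≤ I₁ := setIntegral_nonneg hS₁m fun u _ => sq_nonneg u
  have hF₁pt : ∀ s ∈ Set.Ioc (0:ℝ) t,
      (∫ u in S₁, (Real.cos (Real.exp ((t - s) * A) * u * z) - 1) ∂P)
        ≤ -(K₁ * β ^ 2 * z ^ 2) * I₁ := by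
    intro s hs
    have hs' : s ∈ Set.Icc (0:ℝ) t := ⟨hs.1.le, hs.2⟩
    have hpt : ∀ u ∈ S₁, Real.cos (Real.exp ((t - s) * A) * u * z) - 1
        ≤ -(K₁ * β ^ 2 * z ^ 2) * u ^ 2 := by
      intro u hu
      set c := Real.exp ((t - s) * A) with hc
      have hcpos : 0 < c := Real.exp_pos _
      have hy1 : |c * u * z| ≤ 1 := by
        rw [show c * u * z = c * (u * z) by ring, abs_mul, abs_of_pos hcpos]
        calc c * |u * z| ≤ e * β := by
              apply mul_le_mul (hexp_le s hs') (hS₁uz u hu) (abs_nonneg _) hepos.le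
          _ = 1 := heβ
      have h1 := cos_sub_one_le_neg_sq hy1
      have h2 : β ^ 2 * u ^ 2 * z ^ 2 ≤ (c * u * z) ^ 2 := by
        have h3 : β ≤ c := hexp_ge s hs'
        have h4 : β ^ 2 ≤ c ^ 2 := by nlinarith
        calc β ^ 2 * u ^ 2 * z ^ 2 ≤ c ^ 2 * u ^ 2 * z ^ 2 := by
              nlinarith [sq_nonneg u, sq_nonneg z, sq_nonneg (u * z)]
          _ = (c * u * z) ^ 2 := by ring
      have h5 : K₁ * (β ^ 2 * u ^ 2 * z ^ 2) ≤ K₁ * (c * u * z) ^ 2 :=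
        mul_le_mul_of_nonneg_left h2 hK₁pos.le
      calc Real.cos (c * u * z) - 1 ≤ -(K₁ * (c * u * z) ^ 2) := h1
        _ ≤ -(K₁ * (β ^ 2 * u ^ 2 * z ^ 2)) := by linarith
        _ = -(K₁ * β ^ 2 * z ^ 2) * u ^ 2 := by ring
    calc (∫ u in S₁, (Real.cos (Real.exp ((t - s) * A) * u * z) - 1) ∂P)
        ≤ ∫ u in S₁, -(K₁ * β ^ 2 * z ^ 2) * u ^ 2 ∂P := by
          apply setIntegral_mono_on ((hfs_int s hs').integrableOn)
            (hI₁int.const_mul _) hS₁m hpt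
      _ = -(K₁ * β ^ 2 * z ^ 2) * I₁ := by rw [integral_const_mul]
  have hF₁ : (∫ s in Set.Ioc (0:ℝ) t,
      (∫ u in S₁, (Real.cos (Real.exp ((t - s) * A) * u * z) - 1) ∂P))
        ≤ t * (-(K₁ * β ^ 2 * z ^ 2) * I₁) := by
    have h1 : (∫ s in Set.Ioc (0:ℝ) t, (-(K₁ * β ^ 2 * z ^ 2) * I₁))
        = t * (-(K₁ * β ^ 2 * z ^ 2) * I₁) := by
      rw [setIntegral_const, smul_eq_mul, Real.volume_real_Ioc_of_le ht.le, sub_zero]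
    rw [← h1]
    apply setIntegral_mono_on hF₁intOn (integrableOn_const (ne_of_lt ?_)) measurableSet_Ioc hF₁pt
    rw [Real.volume_Ioc]
    exact ENNReal.ofReal_lt_top
  -- region 2 : finiteness of P S₂
  have hm2pos : 0 < min ε 1 := lt_min hεpos one_pos
  have hS₂fin : P S₂ < ⊤ := by
    have hpt : ∀ u ∈ S₂, ENNReal.ofReal (min ε 1 ^ 2) ≤ ENNReal.ofReal (min (u ^ 2) 1) := by
      rintro u ⟨hu1, hu2⟩
      apply ENNReal.ofReal_le_ofReal
      have h1 : min ε 1 < |u| := hu1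
      have h2 : |u| ≤ 1 := hu2
      apply le_min
      · nlinarith [sq_abs u, abs_nonneg u]
      · nlinarith
    have h3 : ENNReal.ofReal (min ε 1 ^ 2) * P S₂ ≤ ∫⁻ u, ENNReal.ofReal (min (u ^ 2) 1) ∂P := by
      calc ENNReal.ofReal (min ε 1 ^ 2) * P S₂
          = ∫⁻ _ in S₂, ENNReal.ofReal (min ε 1 ^ 2) ∂P := (setLIntegral_const _ _).symm
        _ ≤ ∫⁻ u in S₂, ENNReal.ofReal (min (u ^ 2) 1) ∂P :=
            setLIntegral_mono (Measurable.ennreal_ofReal (by fun_prop)) hpt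
        _ ≤ ∫⁻ u, ENNReal.ofReal (min (u ^ 2) 1) ∂P := setLIntegral_le_lintegral _ _
    by_contra htop
    rw [not_lt, top_le_iff] at htop
    rw [htop, ENNReal.mul_top (by simp [ENNReal.ofReal_eq_zero, not_le]; nlinarith)] at h3
    exact absurd (top_le_iff.1 (le_trans le_rfl h3)) (by simpa using hLevy.ne)
  haveI hμtfin : IsFiniteMeasure (volume.restrict (Set.Ioc (0:ℝ) t)) :=
    ⟨by rw [Measure.restrict_apply_univ, Real.volume_Ioc]; exact ENNReal.ofReal_lt_top⟩
  haveI hPS₂fin : IsFiniteMeasure (P.restrict S₂) :=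
    ⟨by rw [Measure.restrict_apply_univ]; exact hS₂fin⟩
  have hprod : Integrable (fun p : ℝ × ℝ => Real.cos (Real.exp ((t - p.1) * A) * p.2 * z) - 1)
      ((volume.restrict (Set.Ioc (0:ℝ) t)).prod (P.restrict S₂)) := by
    apply Integrable.mono' (integrable_const 2)
      (Continuous.aestronglyMeasurable (by fun_prop))
    apply ae_of_all _ fun p => ?_
    rw [Real.norm_eq_abs, abs_le]
    constructor
    · linarith [Real.neg_one_le_cos (Real.exp ((t - p.1) * A) * p.2 * z)]
    · linarith [Real.cos_le_one (Real.exp ((t - p.1) * A) * p.2 * z)]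
  have hswap : (∫ s in Set.Ioc (0:ℝ) t,
        (∫ u in S₂, (Real.cos (Real.exp ((t - s) * A) * u * z) - 1) ∂P))
      = ∫ u in S₂, (∫ s in Set.Ioc (0:ℝ) t,
        (Real.cos (Real.exp ((t - s) * A) * u * z) - 1)) ∂P :=
    integral_integral_swap hprod
  have hinner : ∀ u ∈ S₂, (∫ s in Set.Ioc (0:ℝ) t,
      (Real.cos (Real.exp ((t - s) * A) * u * z) - 1)) ≤ -C₂ := by
    intro u hu
    have h1 := hflow (u * z) (by rw [← hβ]; exact hS₂uz u hu)
    simpa [mul_assoc] using h1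
  have hF₂ : (∫ s in Set.Ioc (0:ℝ) t,
      (∫ u in S₂, (Real.cos (Real.exp ((t - s) * A) * u * z) - 1) ∂P))
        ≤ -C₂ * (P S₂).toReal := by
    rw [hswap]
    calc (∫ u in S₂, (∫ s in Set.Ioc (0:ℝ) t,
          (Real.cos (Real.exp ((t - s) * A) * u * z) - 1)) ∂P)
        ≤ ∫ _ in S₂, (-C₂) ∂P :=
          setIntegral_mono_on hprod.integral_prod_right (integrable_const _) hS₂m hinner
      _ = -C₂ * (P S₂).toReal := by
          rw [setIntegral_const, smul_eq_mul, mul_comm]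
          rfl
  -- combine
  have hD : (∫ s in Set.Ioc (0:ℝ) t,
      (∫ u, (Real.cos (Real.exp ((t - s) * A) * u * z) - 1) ∂P))
        ≤ t * (-(K₁ * β ^ 2 * z ^ 2) * I₁) + -C₂ * (P S₂).toReal := by
    rw [setIntegral_congr_fun measurableSet_Ioc hsplit]
    rw [integral_add hF₁intOn hprod.integral_prod_left]
    exact add_le_add hF₁ hF₂
  -- lintegral computation
  have h1m : MeasurableSet {u : ℝ | |u| ≤ 1} := measurableSet_le (by fun_prop) measurable_const
  have hS₂ε : ∀ u ∈ S₂, ε ≤ |u| := by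
    rintro u ⟨hu1, hu2⟩
    have hu1' : min ε 1 < |u| := hu1
    have hu2' : |u| ≤ 1 := hu2
    rcases le_total ε 1 with h | h
    · rw [min_eq_left h] at hu1'; exact hu1'.le
    · rw [min_eq_right h] at hu1'; linarith
  have hsplitN : (∫⁻ u, ENNReal.ofReal (min (u ^ 2) (ε ^ 2)) ∂P)
      = (∫⁻ u in S₁, ENNReal.ofReal (u ^ 2) ∂P) + ENNReal.ofReal (ε ^ 2) * P S₂ := by
    have hstep1 := (lintegral_add_compl (μ := P)
      (fun u => ENNReal.ofReal (min (u ^ 2) (ε ^ 2))) h1m).symm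
    have hcompl : {u : ℝ | |u| ≤ 1}ᶜ = {u : ℝ | 1 < |u|} := by ext u; simp [not_le]
    rw [hcompl] at hstep1
    rw [show (∫⁻ u in {u : ℝ | 1 < |u|}, ENNReal.ofReal (min (u ^ 2) (ε ^ 2)) ∂P) = 0 from by
      rw [Measure.restrict_eq_zero.2 hsupp, lintegral_zero_measure], add_zero] at hstep1
    rw [hstep1, ← hunion, lintegral_union hS₂m hdisj]
    congr 1
    · apply setLIntegral_congr_fun hS₁m
      intro u hu
      have h1 : |u| ≤ min ε 1 := hu
      have h2 : u ^ 2 ≤ ε ^ 2 := by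
        have h3 : |u| ≤ ε := h1.trans (min_le_left _ _)
        nlinarith [sq_abs u, abs_nonneg u]
      simp only [min_eq_left h2]
    · rw [show (∫⁻ u in S₂, ENNReal.ofReal (min (u ^ 2) (ε ^ 2)) ∂P)
          = ∫⁻ _ in S₂, ENNReal.ofReal (ε ^ 2) ∂P from
        setLIntegral_congr_fun hS₂m (fun u hu => by
          have h2 : ε ^ 2 ≤ u ^ 2 := by
            have h3 := hS₂ε u hu
            nlinarith [sq_abs u, abs_nonneg u, hεpos]
          rw [min_eq_right h2]), setLIntegral_const]
  have hS₁lfin : (∫⁻ u in S₁, ENNReal.ofReal (u ^ 2) ∂P) < ⊤ := by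
    rw [setLIntegral_congr_fun hS₁m (fun u hu => ?_ :
      Set.EqOn (fun u => ENNReal.ofReal (u ^ 2)) (fun u => ENNReal.ofReal (min (u ^ 2) 1)) S₁)]
    · exact lt_of_le_of_lt (setLIntegral_le_lintegral _ _) hLevy
    · have h1 : |u| ≤ min ε 1 := hu
      have h2 : u ^ 2 ≤ 1 := by
        have h3 : |u| ≤ 1 := h1.trans (min_le_right _ _)
        nlinarith [sq_abs u, abs_nonneg u]
      simp only [min_eq_left h2]
  have hI₁eq : I₁ = (∫⁻ u in S₁, ENNReal.ofReal (u ^ 2) ∂P).toReal := by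
    rw [hI₁, integral_eq_lintegral_of_nonneg_ae (ae_of_all _ fun u => sq_nonneg u)
      (Continuous.aestronglyMeasurable (by fun_prop))]
  have hNtoReal : (∫⁻ u, ENNReal.ofReal (min (u ^ 2) (ε ^ 2)) ∂P).toReal
      = I₁ + ε ^ 2 * (P S₂).toReal := by
    rw [hsplitN, ENNReal.toReal_add hS₁lfin.ne
      (ENNReal.mul_ne_top ENNReal.ofReal_ne_top hS₂fin.ne),
      ENNReal.toReal_mul, ENNReal.toReal_ofReal (sq_nonneg ε), ← hI₁eq]
  -- final assembly
  rw [hφ z, hρ ε, Real.rpow_def_of_pos hεpos]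
  apply Real.exp_le_exp.2
  rw [one_div, Real.log_inv]
  by_cases hlog : Real.log ε = 0
  · rw [hlog]
    norm_num
    apply integral_nonpos
    intro s
    apply integral_nonpos
    intro u
    have := Real.cos_le_one (Real.exp ((t - s) * A) * u * z)
    simp only [Pi.zero_apply]
    linarith
  · have hkey : Real.log ε * (C₃ * ((∫⁻ u, ENNReal.ofReal (min (u ^ 2) (ε ^ 2)) ∂P).toReal /
        (ε ^ 2 * -Real.log ε)))
        = -(C₃ * ((∫⁻ u, ENNReal.ofReal (min (u ^ 2) (ε ^ 2)) ∂P).toReal / ε ^ 2)) := by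
      field_simp
    rw [hkey, hNtoReal]
    set p₂ : ℝ := (P S₂).toReal with hp₂def
    have hp₂ : 0 ≤ p₂ := ENNReal.toReal_nonneg
    have hzε : z ^ 2 * ε ^ 2 = β ^ 2 := by
      have h1 : ε ^ 2 = β ^ 2 / z ^ 2 := by rw [hε, div_pow, sq_abs]
      rw [h1]
      field_simp
    have hexpand : (I₁ + ε ^ 2 * p₂) / ε ^ 2 = I₁ / ε ^ 2 + p₂ := by
      field_simp
    rw [hexpand]
    have hC3a : C₃ ≤ t * K₁ * β ^ 4 := min_le_left _ _
    have hC3b : C₃ ≤ C₂ := min_le_right _ _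
    have hterm : t * K₁ * β ^ 4 * (I₁ / ε ^ 2) = t * K₁ * β ^ 2 * z ^ 2 * I₁ := by
      have h4 : β ^ 4 = β ^ 2 * (z ^ 2 * ε ^ 2) := by rw [hzε]; ring
      rw [h4]
      field_simp
    have hterm2 : C₃ * (I₁ / ε ^ 2) ≤ t * K₁ * β ^ 2 * z ^ 2 * I₁ := by
      rw [← hterm]
      exact mul_le_mul_of_nonneg_right hC3a (div_nonneg hI₁nonneg (sq_nonneg ε))
    have hterm3 : C₃ * p₂ ≤ C₂ * p₂ := mul_le_mul_of_nonneg_right hC3b hp₂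
    have hD' := hD
    nlinarith [hD']
end

section
/- Let ρ : (0,1) → ℝ₊ and suppose there is a sequence εₙ → 0+ with ρ(εₙ) ≤ C < ∞. Let t ∈ (0, 1/(2C)) and suppose a real random variable X satisfies, for each n, P(X ∈ [Mₙ − √εₙ, Mₙ + √εₙ]) ≥ εₙ^{t ρ(εₙ)} − K [εₙ ln(1/εₙ)] ρ(εₙ) for some reals Mₙ and a constant K. Then P(X ∈ [xₙ, yₙ])/(yₙ − xₙ) → +∞ where xₙ = Mₙ − √εₙ, yₙ = Mₙ + √εₙ; consequently X has no bounded density. -/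
open MeasureTheory Filter

theorem ratio_blowup_no_bounded_density
    (ρ : ℝ → ℝ) (hρpos : ∀ ε ∈ Set.Ioo (0:ℝ) 1, 0 ≤ ρ ε)
    (ε : ℕ → ℝ) (hεmem : ∀ n, ε n ∈ Set.Ioo (0:ℝ) 1)
    (hεlim : Tendsto ε atTop (nhdsWithin 0 (Set.Ioi 0)))
    (C : ℝ) (hC : ∀ n, ρ (ε n) ≤ C)
    (t : ℝ) (ht : 0 < t) (htC : t * C < 1 / 2)
    (μ : Measure ℝ) [IsProbabilityMeasure μ]
    (M : ℕ → ℝ) (K : ℝ)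
    (hlow : ∀ n, ENNReal.ofReal
        ((ε n) ^ (t * ρ (ε n)) - K * (ε n * Real.log (1 / ε n)) * ρ (ε n)) ≤
      μ (Set.Icc (M n - Real.sqrt (ε n)) (M n + Real.sqrt (ε n)))) :
    Tendsto (fun n => (μ (Set.Icc (M n - Real.sqrt (ε n)) (M n + Real.sqrt (ε n)))).toReal /
        (2 * Real.sqrt (ε n))) atTop atTop ∧
    ¬ ∃ (p : ℝ → ℝ) (M' : ℝ), Measurable p ∧ (∀ u, 0 ≤ p u) ∧ (∀ u, p u ≤ M') ∧
      ∀ B : Set ℝ, MeasurableSet B → μ B = ∫⁻ u in B, ENNReal.ofReal (p u) := by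
  have hC0 : 0 ≤ C := le_trans (hρpos _ (hεmem 0)) (hC 0)
  -- lower bound function
  set lb : ℝ → ℝ := fun x =>
    (x ^ (t*C) - |K| * C * (x * Real.log (1 / x))) / (2 * Real.sqrt x) with hlbdef
  have hlb : ∀ n, lb (ε n) ≤
      (μ (Set.Icc (M n - Real.sqrt (ε n)) (M n + Real.sqrt (ε n)))).toReal /
        (2 * Real.sqrt (ε n)) := by
    intro n
    obtain ⟨hε0, hε1⟩ := hεmem n
    have hsq : 0 < Real.sqrt (ε n) := Real.sqrt_pos.mpr hε0
    have hlog : 0 ≤ Real.log (1 / ε n) :=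
      Real.log_nonneg (by rw [le_div_iff₀ hε0]; linarith)
    have hρ0 : 0 ≤ ρ (ε n) := hρpos _ ⟨hε0, hε1⟩
    have h1 : (ε n) ^ (t*C) ≤ (ε n) ^ (t * ρ (ε n)) :=
      Real.rpow_le_rpow_of_exponent_ge hε0 hε1.le
        (by nlinarith [hC n])
    have he : 0 ≤ ε n * Real.log (1 / ε n) := mul_nonneg hε0.le hlog
    have h2 : K * (ε n * Real.log (1 / ε n)) * ρ (ε n) ≤
        |K| * C * (ε n * Real.log (1 / ε n)) := by
      nlinarith [mul_le_mul_of_nonneg_left (hC n) (mul_nonneg (abs_nonneg K) he),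
        mul_le_mul_of_nonneg_right (le_abs_self K) (mul_nonneg he hρ0)]
    have hfin : μ (Set.Icc (M n - Real.sqrt (ε n)) (M n + Real.sqrt (ε n))) ≠ ⊤ :=
      measure_ne_top μ _
    have h3 := ENNReal.toReal_mono hfin (hlow n)
    rw [ENNReal.toReal_ofReal'] at h3
    have hnum : (ε n) ^ (t*C) - |K| * C * (ε n * Real.log (1 / ε n)) ≤
        (μ (Set.Icc (M n - Real.sqrt (ε n)) (M n + Real.sqrt (ε n)))).toReal := by
      calc (ε n) ^ (t*C) - |K| * C * (ε n * Real.log (1 / ε n))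
          ≤ (ε n) ^ (t * ρ (ε n)) - K * (ε n * Real.log (1 / ε n)) * ρ (ε n) := by linarith
        _ ≤ max ((ε n) ^ (t * ρ (ε n)) - K * (ε n * Real.log (1 / ε n)) * ρ (ε n)) 0 :=
            le_max_left _ _
        _ ≤ _ := h3
    have h2s : (0:ℝ) < 2 * Real.sqrt (ε n) := by positivity
    simp only [hlbdef]
    gcongr
  -- tendsto of the lower bound at 0+
  have hlbtendsto : Tendsto lb (nhdsWithin 0 (Set.Ioi 0)) atTop := by
    have hp : (0:ℝ) < 1/2 - t*C := by linarith
    have hA : Tendsto (fun x : ℝ => (x⁻¹) ^ ((1:ℝ)/2 - t*C) / 2)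
        (nhdsWithin 0 (Set.Ioi 0)) atTop := by
      have := (tendsto_rpow_atTop hp).comp tendsto_inv_nhdsGT_zero
      exact this.atTop_div_const (by norm_num)
    have hB : Tendsto (fun x : ℝ => |K| * C / 2 * (Real.log x * x ^ ((1:ℝ)/2)))
        (nhdsWithin 0 (Set.Ioi 0)) (nhds (|K| * C / 2 * 0)) :=
      (tendsto_log_mul_rpow_nhdsGT_zero (by norm_num)).const_mul _
    have hsum := hA.atTop_add hB
    refine hsum.congr' ?_
    filter_upwards [self_mem_nhdsWithin] with x hx
    have hx0 : (0:ℝ) < x := hx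
    have hs : Real.sqrt x = x ^ ((1:ℝ)/2) := Real.sqrt_eq_rpow x
    have hinv : (x⁻¹) ^ ((1:ℝ)/2 - t*C) = x ^ (t*C) / x ^ ((1:ℝ)/2) := by
      rw [Real.inv_rpow hx0.le, ← Real.rpow_neg hx0.le, neg_sub, Real.rpow_sub hx0]
    rw [hlbdef]
    simp only
    have hlog1 : Real.log (1 / x) = -Real.log x := by rw [one_div, Real.log_inv]
    rw [hinv, hs, hlog1]
    set A := x ^ (t*C) with hA'
    set B := x ^ ((1:ℝ)/2) with hB'
    set L := Real.log x with hL'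
    have hBpos : 0 < B := Real.rpow_pos_of_pos hx0 _
    have hxB : x = B * B := by
      rw [hB', ← Real.rpow_add hx0]; norm_num
    rw [hxB]
    field_simp
    ring
  have hg : Tendsto (fun n => lb (ε n)) atTop atTop := hlbtendsto.comp hεlim
  have hmain : Tendsto (fun n => (μ (Set.Icc (M n - Real.sqrt (ε n)) (M n + Real.sqrt (ε n)))).toReal /
        (2 * Real.sqrt (ε n))) atTop atTop := tendsto_atTop_mono hlb hg
  refine ⟨hmain, ?_⟩
  rintro ⟨p, M', hmeas, hp0, hpM, hdens⟩
  have hM0 : 0 ≤ M' := le_trans (hp0 0) (hpM 0)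
  have hub : ∀ n, (μ (Set.Icc (M n - Real.sqrt (ε n)) (M n + Real.sqrt (ε n)))).toReal /
      (2 * Real.sqrt (ε n)) ≤ M' := by
    intro n
    obtain ⟨hε0, _⟩ := hεmem n
    have hsq : 0 < Real.sqrt (ε n) := Real.sqrt_pos.mpr hε0
    set a := M n - Real.sqrt (ε n)
    set b := M n + Real.sqrt (ε n)
    have h1 : μ (Set.Icc a b) = ∫⁻ u in Set.Icc a b, ENNReal.ofReal (p u) :=
      hdens _ measurableSet_Icc
    have h2 : (∫⁻ u in Set.Icc a b, ENNReal.ofReal (p u)) ≤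
        ENNReal.ofReal M' * volume (Set.Icc a b) := by
      calc (∫⁻ u in Set.Icc a b, ENNReal.ofReal (p u))
          ≤ ∫⁻ _ in Set.Icc a b, ENNReal.ofReal M' :=
            lintegral_mono fun u => ENNReal.ofReal_le_ofReal (hpM u)
        _ = ENNReal.ofReal M' * volume (Set.Icc a b) := by
            rw [setLIntegral_const]
    have h3 : volume (Set.Icc a b) = ENNReal.ofReal (2 * Real.sqrt (ε n)) := by
      rw [Real.volume_Icc]; congr 1; simp [a, b]; ring
    have h4 : μ (Set.Icc a b) ≤ ENNReal.ofReal (M' * (2 * Real.sqrt (ε n))) := by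
      rw [h1, ENNReal.ofReal_mul hM0, ← h3]; exact h2
    have h5 : (μ (Set.Icc a b)).toReal ≤ M' * (2 * Real.sqrt (ε n)) := by
      have := ENNReal.toReal_mono ENNReal.ofReal_ne_top h4
      rwa [ENNReal.toReal_ofReal (by positivity)] at this
    rw [div_le_iff₀ (by positivity)]
    linarith
  obtain ⟨n, hn⟩ := (hmain.eventually_gt_atTop M').exists
  exact absurd (hub n) (not_le.mpr hn)
end
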